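/- arXiv:2106.11675 — 3 statements merged into one kernel-verified Lean document; each statement's English description precedes it below -/
import Mathlib

section
/- Let G be a finite simple graph and let (C₁,F₁) and (C₂,F₂) be antlers in G. Then |C₁ ∩ F₂| = |C₂ ∩ F₁|; moreover both quantities equal fvs(G[F₁ ∪ F₂]). -/
variable {V : Type*}

/-- The subgraph of `G` with edges restricted to the vertex set `S`
(kept on the same vertex type; vertices outside `S` become isolated).
Used to model the induced subgraph `G[S]` and vertex deletion `G - X = G[Xᶜ]`. -/
def graphRestrict (G : SimpleGraph V) (S : Set V) : SimpleGraph V where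
  Adj u v := G.Adj u v ∧ u ∈ S ∧ v ∈ S
  symm := ⟨fun _ _ h => ⟨h.1.symm, h.2.2, h.2.1⟩⟩
  loopless := ⟨fun _ h => G.irrefl h.1⟩

/-- `X` is a feedback vertex set of `G`: deleting `X` leaves an acyclic graph. -/
def IsFVS (G : SimpleGraph V) (X : Set V) : Prop :=
  (graphRestrict G Xᶜ).IsAcyclic

/-- The feedback vertex number of `G`: the minimum size of a feedback vertex set. -/
noncomputable def fvs (G : SimpleGraph V) : ℕ :=
  sInf {n | ∃ X : Set V, IsFVS G X ∧ X.ncard = n}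

/-- `X` is a minimum feedback vertex set of `G`. -/
def IsMinFVS (G : SimpleGraph V) (X : Set V) : Prop :=
  IsFVS G X ∧ ∀ Y : Set V, IsFVS G Y → X.ncard ≤ Y.ncard

/-- `(C, F)` is a feedback vertex cut in `G`: `C` and `F` are disjoint, `G[F]` is a
forest, and every tree of `G[F]` has at most one edge to `V(G) \ (C ∪ F)` (i.e. any two
edges from the same component of `G[F]` to the outside coincide). -/
def IsFVC (G : SimpleGraph V) (C F : Set V) : Prop :=
  Disjoint C F ∧ (graphRestrict G F).IsAcyclic ∧
    ∀ u₁ u₂ w₁ w₂ : V, u₁ ∈ F → u₂ ∈ F →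
      (graphRestrict G F).Reachable u₁ u₂ →
      w₁ ∉ C ∪ F → w₂ ∉ C ∪ F → G.Adj u₁ w₁ → G.Adj u₂ w₂ →
      u₁ = u₂ ∧ w₁ = w₂

/-- `(C, F)` is an antler in `G`: a feedback vertex cut with `|C| ≤ fvs(G[C ∪ F])`. -/
def IsAntler (G : SimpleGraph V) (C F : Set V) : Prop :=
  IsFVC G C F ∧ C.ncard ≤ fvs (graphRestrict G (C ∪ F))

/-- A graph `H` together with a vertex set `C` "has order `z`" if every connected
component `H'` of `H` satisfies `fvs(H') = |C ∩ V(H')| ≤ z`. -/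
def HasCertOrder {W : Type*} (H : SimpleGraph W) (C : Set W) (z : ℕ) : Prop :=
  ∀ v : W,
    fvs (graphRestrict H {u | H.Reachable u v}) = (C ∩ {u | H.Reachable u v}).ncard ∧
    (C ∩ {u | H.Reachable u v}).ncard ≤ z

/-- `H` is a `C`-certificate in `G`: a subgraph of `G` for which `C` is a minimum
feedback vertex set. -/
def IsCCertificate (G : SimpleGraph V) (C : Set V) (H : G.Subgraph) : Prop :=
  C ⊆ H.verts ∧ IsMinFVS H.coe {u : H.verts | (u : V) ∈ C}

/-- `H` is a `C`-certificate of order `z` in `G`. -/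
def IsCCertificateOfOrder (G : SimpleGraph V) (C : Set V) (H : G.Subgraph) (z : ℕ) : Prop :=
  IsCCertificate G C H ∧ HasCertOrder H.coe {u : H.verts | (u : V) ∈ C} z

/-- `(C, F)` is a `z`-antler in `G`: an antler such that `G[C ∪ F]` contains a
`C`-certificate of order `z`. -/
def IsZAntler (G : SimpleGraph V) (z : ℕ) (C F : Set V) : Prop :=
  IsAntler G C F ∧ ∃ H : G.Subgraph, H.verts ⊆ C ∪ F ∧ IsCCertificateOfOrder G C H z

/-- The function `f_r(x) = 2x³ + 3x² - x`. -/
def fr (x : ℕ) : ℕ := 2 * x ^ 3 + 3 * x ^ 2 - x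

/-- A feedback vertex cut `(C, F)` is reducible if `|F| > f_r(|C|)`. -/
def IsReducibleFVC (G : SimpleGraph V) (C F : Set V) : Prop :=
  IsFVC G C F ∧ fr C.ncard < F.ncard

/-- A feedback vertex cut `(C, F)` is simple if `|F| ≤ 2 f_r(|C|)` and either
`G[F]` is connected, or all trees of `G[F]` have a common neighbor `v` and there is a
single-tree feedback vertex cut `(C, F₂)` with `v ∈ F₂ \ F` and `F ⊆ F₂`. -/
def IsSimpleFVC (G : SimpleGraph V) (C F : Set V) : Prop :=
  IsFVC G C F ∧ F.ncard ≤ 2 * fr C.ncard ∧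
    ((G.induce F).Connected ∨
      ∃ v : V,
        (∀ u ∈ F, ∃ u' ∈ F, (graphRestrict G F).Reachable u u' ∧ G.Adj u' v) ∧
        ∃ F₂ : Set V, IsFVC G C F₂ ∧ (G.induce F₂).Connected ∧ v ∈ F₂ \ F ∧ F ⊆ F₂)

/-- `G` contains a `v`-flower of order `k`: `k` cycles whose vertex sets pairwise
intersect exactly in `{v}`. -/
def HasFlower (G : SimpleGraph V) (v : V) (k : ℕ) : Prop :=
  ∃ c : Fin k → G.Walk v v,
    (∀ i, (c i).IsCycle) ∧
    ∀ i j, i ≠ j → {x | x ∈ (c i).support} ∩ {x | x ∈ (c j).support} = {v}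

/-- `G` contains `k` pairwise vertex-disjoint cycles. -/
def HasDisjointCycles (G : SimpleGraph V) (k : ℕ) : Prop :=
  ∃ (b : Fin k → V) (c : ∀ i, G.Walk (b i) (b i)),
    (∀ i, (c i).IsCycle) ∧
    ∀ i j, i ≠ j → Disjoint {x | x ∈ (c i).support} {x | x ∈ (c j).support}

/-- `(C, F)` is a 1-antler in `G` (self-contained definition): `G[F]` is a forest,
every tree of `G[F]` has at most one edge to `V(G) \ (C ∪ F)`, and `G[C ∪ F]`
contains `|C|` pairwise vertex-disjoint cycles. -/
def IsOneAntler (G : SimpleGraph V) (C F : Set V) : Prop :=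
  IsFVC G C F ∧ HasDisjointCycles (graphRestrict G (C ∪ F)) C.ncard

/-- `C 1, F 1, …, C ℓ, F ℓ` is a `z`-antler-sequence for `G`: the sets are pairwise
disjoint and each `(C i, F i)` is a `z`-antler in `G` minus all earlier sets. -/
def IsAntlerSeq (G : SimpleGraph V) (z ℓ : ℕ) (C F : Fin ℓ → Set V) : Prop :=
  (∀ i j, i ≠ j → Disjoint (C i) (C j)) ∧
  (∀ i j, i ≠ j → Disjoint (F i) (F j)) ∧
  (∀ i j, Disjoint (C i) (F j)) ∧
  ∀ i, IsZAntler (graphRestrict G (⋃ j, ⋃ (_ : j < i), (C j ∪ F j))ᶜ) z (C i) (F i)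


section AuxAntler

open SimpleGraph

lemma graphRestrict_adj {G : SimpleGraph V} {S : Set V} {a b : V} :
    (graphRestrict G S).Adj a b ↔ G.Adj a b ∧ a ∈ S ∧ b ∈ S := Iff.rfl

lemma aux_acyclic_mono {H H' : SimpleGraph V} (hle : ∀ a b, H.Adj a b → H'.Adj a b)
    (h : H'.IsAcyclic) : H.IsAcyclic := by
  intro v c hc
  refine h (c.transfer H' ?_) (hc.transfer _)
  intro e he
  revert he
  refine Sym2.ind (fun a b he => ?_) e
  exact H'.mem_edgeSet.mpr (hle a b (c.adj_of_mem_edges he))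

lemma aux_exit_lemma {G H : SimpleGraph V} {S F : Set V}
    (hH : ∀ a b, H.Adj a b → G.Adj a b ∧ a ∈ S ∧ b ∈ S)
    {x y : V} (p : H.Walk x y) :
    x ∈ F → y ∉ F →
    ∃ u w, u ∈ F ∧ w ∉ F ∧ w ∈ S ∧ (graphRestrict G F).Reachable x u ∧ G.Adj u w ∧
      s(u, w) ∈ p.edges := by
  induction p with
  | nil => exact fun hx hy => absurd hx hy
  | @cons a b c h q ih =>
    intro hx hy
    by_cases hb : b ∈ F
    · obtain ⟨u, w, hu, hw, hwS, hr, hadj, hmem⟩ := ih hb hy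
      refine ⟨u, w, hu, hw, hwS, ?_, hadj, ?_⟩
      · exact (SimpleGraph.Adj.reachable
          (⟨(hH a b h).1, hx, hb⟩ : (graphRestrict G F).Adj a b)).trans hr
      · rw [SimpleGraph.Walk.edges_cons]; exact List.mem_cons_of_mem _ hmem
    · exact ⟨a, b, hx, hb, (hH a b h).2.2, SimpleGraph.Reachable.refl _, (hH a b h).1,
        by rw [SimpleGraph.Walk.edges_cons]; exact List.mem_cons_self⟩

lemma aux_no_mixed {G H : SimpleGraph V} {S C F : Set V}
    (hH : ∀ a b, H.Adj a b → G.Adj a b ∧ a ∈ S ∧ b ∈ S)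
    (hSC : Disjoint S C)
    (cond : ∀ u₁ u₂ w₁ w₂ : V, u₁ ∈ F → u₂ ∈ F →
      (graphRestrict G F).Reachable u₁ u₂ →
      w₁ ∉ C ∪ F → w₂ ∉ C ∪ F → G.Adj u₁ w₁ → G.Adj u₂ w₂ →
      u₁ = u₂ ∧ w₁ = w₂)
    {x y : V} (p : H.Walk x y) :
    x ∉ F → y ∉ F → p.edges.Nodup → ∀ v ∈ p.support, v ∉ F := by
  have notCF : ∀ a : V, a ∈ S → a ∉ F → a ∉ C ∪ F := fun a hs hf h =>
    h.elim (fun hc => Set.disjoint_left.mp hSC hs hc) hf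
  induction p with
  | nil =>
    intro hx _ _ v hv
    rw [SimpleGraph.Walk.support_nil, List.mem_singleton] at hv
    exact hv ▸ hx
  | @cons a b c h q ih =>
    intro hx hy hnd v hv
    rw [SimpleGraph.Walk.edges_cons, List.nodup_cons] at hnd
    by_cases hb : b ∈ F
    · exfalso
      obtain ⟨u, w, hu, hw, hwS, hr, hadj, hmem⟩ := aux_exit_lemma hH q hb hy
      obtain ⟨hbu, haw⟩ := cond b u a w hb hu hr (notCF a (hH a b h).2.1 hx)
        (notCF w hwS hw) (hH a b h).1.symm hadj
      apply hnd.1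
      rw [show s(a, b) = s(u, w) by rw [← hbu, ← haw]; exact Sym2.eq_swap]
      exact hmem
    · rw [SimpleGraph.Walk.support_cons, List.mem_cons] at hv
      rcases hv with rfl | hv
      · exact hx
      · exact ih hb hy hnd.2 v hv

lemma aux_core_acyclic {G H : SimpleGraph V} {S C F : Set V}
    (hH : ∀ a b, H.Adj a b → G.Adj a b ∧ a ∈ S ∧ b ∈ S)
    (hFVC : IsFVC G C F) (hSC : Disjoint S C)
    (hrest : (graphRestrict G (S \ F)).IsAcyclic) :
    H.IsAcyclic := by
  haveI := Classical.decEq V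
  have notCF : ∀ a : V, a ∈ S → a ∉ F → a ∉ C ∪ F := fun a hs hf h =>
    h.elim (fun hc => Set.disjoint_left.mp hSC hs hc) hf
  obtain ⟨hdisj, hforest, cond⟩ := hFVC
  intro v c hc
  by_cases hmix : ∃ x ∈ c.support, x ∈ F
  · obtain ⟨xF, hxFs, hxF⟩ := hmix
    by_cases hv : v ∈ F
    · by_cases hall : ∀ x ∈ c.support, x ∈ F
      · refine hforest (c.transfer (graphRestrict G F) ?_) (hc.transfer _)
        intro e he
        revert he
        refine Sym2.ind (fun a b he => ?_) e
        exact (graphRestrict G F).mem_edgeSet.mpr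
          ⟨(hH a b (c.adj_of_mem_edges he)).1,
            hall a (c.fst_mem_support_of_mem_edges he),
            hall b (c.snd_mem_support_of_mem_edges he)⟩
      · push_neg at hall
        obtain ⟨w₀, hw₀s, hw₀⟩ := hall
        obtain ⟨u₂, w₂, hu₂, hw₂, hw₂S, hr₂, hadj₂, hmem₂⟩ :=
          aux_exit_lemma hH (c.takeUntil w₀ hw₀s) hv hw₀
        obtain ⟨u₁, w₁, hu₁, hw₁, hw₁S, hr₁, hadj₁, hmem₁⟩ :=
          aux_exit_lemma hH (c.dropUntil w₀ hw₀s).reverse hv hw₀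
        obtain ⟨hu, hw⟩ := cond u₁ u₂ w₁ w₂ hu₁ hu₂ (hr₁.symm.trans hr₂)
          (notCF w₁ hw₁S hw₁) (notCF w₂ hw₂S hw₂) hadj₁ hadj₂
        have hmem₁' : s(u₁, w₁) ∈ (c.dropUntil w₀ hw₀s).edges := by
          rwa [SimpleGraph.Walk.edges_reverse, List.mem_reverse] at hmem₁
        have hnd := hc.isCircuit.isTrail.edges_nodup
        rw [← c.take_spec hw₀s, SimpleGraph.Walk.edges_append] at hnd
        exact List.disjoint_of_nodup_append hnd hmem₂ (hu ▸ hw ▸ hmem₁')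
    · exact absurd hxF
        (aux_no_mixed hH hSC cond c hv hv hc.isCircuit.isTrail.edges_nodup xF hxFs)
  · push_neg at hmix
    refine hrest (c.transfer (graphRestrict G (S \ F)) ?_) (hc.transfer _)
    intro e he
    revert he
    refine Sym2.ind (fun a b he => ?_) e
    have hadj := c.adj_of_mem_edges he
    exact (graphRestrict G (S \ F)).mem_edgeSet.mpr
      ⟨(hH a b hadj).1,
        ⟨(hH a b hadj).2.1, hmix a (c.fst_mem_support_of_mem_edges he)⟩,
        ⟨(hH a b hadj).2.2, hmix b (c.snd_mem_support_of_mem_edges he)⟩⟩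

lemma aux_isFVS_univ (G : SimpleGraph V) : IsFVS G Set.univ := by
  intro v c hc
  cases c with
  | nil => exact hc.isCircuit.ne_nil rfl
  | cons h q => exact h.2.1 (Set.mem_univ _)

lemma aux_fvs_le (G : SimpleGraph V) {X : Set V} (h : IsFVS G X) : fvs G ≤ X.ncard :=
  Nat.sInf_le ⟨X, h, rfl⟩

lemma aux_exists_fvs (G : SimpleGraph V) : ∃ X : Set V, IsFVS G X ∧ X.ncard = fvs G := by
  have h : fvs G ∈ {n | ∃ X : Set V, IsFVS G X ∧ X.ncard = n} :=
    Nat.sInf_mem ⟨(Set.univ : Set V).ncard, Set.univ, aux_isFVS_univ G, rfl⟩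
  exact h

lemma aux_upper {G : SimpleGraph V} {Ca Fa Cb Fb : Set V}
    (ha : IsAntler G Ca Fa) (hb : IsAntler G Cb Fb) :
    IsFVS (graphRestrict G (Fa ∪ Fb)) (Cb ∩ Fa) := by
  refine aux_core_acyclic (G := G) (S := (Fa ∪ Fb) \ (Cb ∩ Fa)) (C := Cb) (F := Fb)
    ?_ hb.1 ?_ ?_
  · intro a b hab
    rw [graphRestrict_adj, graphRestrict_adj] at hab
    obtain ⟨⟨hG, ha1, hb1⟩, ha2, hb2⟩ := hab
    exact ⟨hG, ⟨ha1, ha2⟩, ⟨hb1, hb2⟩⟩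
  · rw [Set.disjoint_left]
    rintro a ⟨haFF, haX⟩ haC
    rcases haFF with h | h
    · exact haX ⟨haC, h⟩
    · exact Set.disjoint_left.mp hb.1.1 haC h
  · refine aux_acyclic_mono ?_ ha.1.2.1
    intro a b hab
    rw [graphRestrict_adj] at hab
    obtain ⟨hG, ⟨⟨haFF, _⟩, haF⟩, ⟨⟨hbFF, _⟩, hbF⟩⟩ := hab
    exact ⟨hG, haFF.resolve_right haF, hbFF.resolve_right hbF⟩

lemma aux_lower [Fintype V] {G : SimpleGraph V} {Ca Fa : Set V} (Fb : Set V)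
    (ha : IsAntler G Ca Fa) :
    (Ca ∩ Fb).ncard ≤ fvs (graphRestrict G (Fa ∪ Fb)) := by
  obtain ⟨X₀, hX₀, hX₀card⟩ := aux_exists_fvs (graphRestrict G (Fa ∪ Fb))
  set X := X₀ ∩ (Fa ∪ Fb) with hXdef
  have hXfvs : IsFVS (graphRestrict G (Fa ∪ Fb)) X := by
    refine aux_acyclic_mono ?_ hX₀
    intro a b hab
    simp only [graphRestrict_adj, Set.mem_compl_iff, hXdef, Set.mem_inter_iff, not_and,
      Set.mem_union] at hab ⊢
    tauto
  have hY : IsFVS (graphRestrict G (Ca ∪ Fa)) ((Ca \ Fb) ∪ X) := by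
    refine aux_acyclic_mono ?_ hXfvs
    intro a b hab
    simp only [graphRestrict_adj, Set.mem_compl_iff, Set.mem_union, Set.mem_diff,
      not_or, not_and, not_not] at hab ⊢
    tauto
  have h1 : fvs (graphRestrict G (Ca ∪ Fa)) ≤ (Ca \ Fb).ncard + X.ncard :=
    le_trans (aux_fvs_le _ hY) (Set.ncard_union_le _ _)
  have h2 := ha.2
  have h3 : (Ca \ Fb).ncard + (Ca ∩ Fb).ncard = Ca.ncard := by
    rw [← Set.diff_self_inter]
    exact Set.ncard_diff_add_ncard_of_subset Set.inter_subset_left (Set.toFinite _)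
  have h4 : X.ncard ≤ fvs (graphRestrict G (Fa ∪ Fb)) :=
    hX₀card ▸ Set.ncard_le_ncard Set.inter_subset_left (Set.toFinite _)
  omega

end AuxAntler

theorem stmt4 [Fintype V] (G : SimpleGraph V) (C₁ F₁ C₂ F₂ : Set V)
    (h₁ : IsAntler G C₁ F₁) (h₂ : IsAntler G C₂ F₂) :
    (C₁ ∩ F₂).ncard = (C₂ ∩ F₁).ncard ∧
    (C₁ ∩ F₂).ncard = fvs (graphRestrict G (F₁ ∪ F₂)) := by
  have ub1 : fvs (graphRestrict G (F₁ ∪ F₂)) ≤ (C₁ ∩ F₂).ncard := by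
    have := aux_fvs_le _ (aux_upper h₂ h₁)
    rwa [Set.union_comm F₂ F₁] at this
  have ub2 : fvs (graphRestrict G (F₁ ∪ F₂)) ≤ (C₂ ∩ F₁).ncard :=
    aux_fvs_le _ (aux_upper h₁ h₂)
  have lb1 : (C₁ ∩ F₂).ncard ≤ fvs (graphRestrict G (F₁ ∪ F₂)) := aux_lower F₂ h₁
  have lb2 : (C₂ ∩ F₁).ncard ≤ fvs (graphRestrict G (F₁ ∪ F₂)) := by
    have := aux_lower F₁ h₂
    rwa [Set.union_comm F₂ F₁] at this
  omega
end

section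
/- Let G be a finite simple graph, let z ≥ 0 be an integer, and let (C,F) be a z-antler in G. Then there exists F' ⊆ F such that (C,F') is a z-antler in G and the forest G[F'] has at most (|C|/2)·(z² + 2z − 1) connected components (trees). -/
variable {V : Type*}

/-! ## Auxiliary development -/

open SimpleGraph Set

namespace ZA


lemma gr_adj {G : SimpleGraph V} {S : Set V} {u v : V} :
    (graphRestrict G S).Adj u v ↔ G.Adj u v ∧ u ∈ S ∧ v ∈ S := Iff.rfl

lemma gr_le (G : SimpleGraph V) (S : Set V) : graphRestrict G S ≤ G := fun _ _ h => h.1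

lemma gr_mono_left {G G' : SimpleGraph V} (h : G ≤ G') (S : Set V) :
    graphRestrict G S ≤ graphRestrict G' S := fun _ _ hh => ⟨h hh.1, hh.2⟩

lemma gr_mono_right (G : SimpleGraph V) {S T : Set V} (h : S ⊆ T) :
    graphRestrict G S ≤ graphRestrict G T := fun _ _ hh => ⟨hh.1, h hh.2.1, h hh.2.2⟩

lemma gr_gr (G : SimpleGraph V) (S T : Set V) :
    graphRestrict (graphRestrict G S) T = graphRestrict G (S ∩ T) := by
  ext u v
  constructor
  · rintro ⟨⟨h, hs, hs'⟩, ht, ht'⟩; exact ⟨h, ⟨hs, ht⟩, ⟨hs', ht'⟩⟩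
  · rintro ⟨h, ⟨hs, ht⟩, hs', ht'⟩; exact ⟨⟨h, hs, hs'⟩, ht, ht'⟩

lemma acyclic_anti {G G' : SimpleGraph V} (h : G ≤ G') (ha : G'.IsAcyclic) : G.IsAcyclic :=
  fun _ c hc => ha (c.mapLe h) (hc.mapLe h)

lemma acyclic_bot' : (graphRestrict (G : SimpleGraph V) ∅).IsAcyclic := by
  intro v c hc
  cases c with
  | nil => exact hc.ne_nil rfl
  | cons h p => exact h.2.1

lemma isFVS_univ (G : SimpleGraph V) : IsFVS G univ := by
  have : (univ : Set V)ᶜ = ∅ := by simp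
  rw [IsFVS, this]
  exact acyclic_bot'

lemma fvs_nonempty (G : SimpleGraph V) :
    {n | ∃ X : Set V, IsFVS G X ∧ X.ncard = n}.Nonempty :=
  ⟨(univ : Set V).ncard, univ, isFVS_univ G, rfl⟩

lemma fvs_le {G : SimpleGraph V} {X : Set V} (h : IsFVS G X) : fvs G ≤ X.ncard :=
  Nat.sInf_le ⟨X, h, rfl⟩

lemma exists_fvs (G : SimpleGraph V) : ∃ X : Set V, IsFVS G X ∧ X.ncard = fvs G :=
  Nat.sInf_mem (fvs_nonempty G)

lemma le_fvs {G : SimpleGraph V} {k : ℕ} (h : ∀ X : Set V, IsFVS G X → k ≤ X.ncard) :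
    k ≤ fvs G := by
  obtain ⟨X, hX, hc⟩ := exists_fvs G
  exact hc ▸ h X hX

lemma fvs_mono {G G' : SimpleGraph V} (h : G ≤ G') : fvs G ≤ fvs G' := by
  obtain ⟨X, hX, hc⟩ := exists_fvs G'
  exact hc ▸ fvs_le (acyclic_anti (gr_mono_left h _) hX)

lemma not_acyclic_of_lt_fvs {G : SimpleGraph V} {X : Set V} (h : X.ncard < fvs G) :
    ¬ (graphRestrict G Xᶜ).IsAcyclic := fun ha => absurd (fvs_le ha) (not_le.2 h)

/-! ### components -/

def cmp (L : SimpleGraph V) (v : V) : Set V := {u | L.Reachable u v}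

lemma mem_cmp_self (L : SimpleGraph V) (v : V) : v ∈ cmp L v := Reachable.refl v

lemma cmp_eq_of_mem {L : SimpleGraph V} {u v : V} (h : u ∈ cmp L v) : cmp L u = cmp L v :=
  Set.ext fun _ => ⟨fun hx => hx.trans h, fun hx => hx.trans h.symm⟩

lemma cmp_comm {L : SimpleGraph V} {u v : V} (h : u ∈ cmp L v) : v ∈ cmp L u := h.symm

lemma cmp_mono {L L' : SimpleGraph V} (h : L ≤ L') (v : V) : cmp L v ⊆ cmp L' v :=
  fun _ hu => hu.mono h

lemma support_subset_cmp {L : SimpleGraph V} {a b : V} (w : L.Walk a b) :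
    ∀ x ∈ w.support, x ∈ cmp L b := by
  classical
  exact fun _ hx => ⟨w.dropUntil _ hx⟩

def compClosed (L : SimpleGraph V) (A : Set V) : Prop := ∀ ⦃x⦄, x ∈ A → cmp L x ⊆ A

lemma compClosed_univ (L : SimpleGraph V) : compClosed L univ := fun _ _ _ _ => trivial

lemma compClosed_compl {L : SimpleGraph V} {A : Set V} (h : compClosed L A) :
    compClosed L Aᶜ := by
  intro x hx u hu
  intro huA
  exact hx (h huA (cmp_comm hu))

lemma compClosed_cmp (L : SimpleGraph V) (v : V) : compClosed L (cmp L v) := by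
  intro x hx u hu
  exact hu.trans hx

lemma adj_mem_cmp {L : SimpleGraph V} {u v : V} (h : L.Adj u v) : u ∈ cmp L v :=
  ⟨h.toWalk⟩

/-- Every vertex on a walk towards `y` satisfying an adjacency-closed property. -/
lemma support_cond {M : SimpleGraph V} {P : V → Prop} (hP : ∀ a b, M.Adj a b → P a)
    {x y : V} (w : M.Walk x y) (hy : P y) : ∀ z ∈ w.support, P z := by
  classical
  intro z hz
  by_cases hzy : z = y
  · exact hzy ▸ hy
  · obtain ⟨u, hadj, -, -⟩ := (SimpleGraph.Walk.not_nil_iff).1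
      (SimpleGraph.Walk.not_nil_of_ne hzy : ¬ (w.dropUntil z hz).Nil)
    exact hP _ _ hadj

/-- Lifting a walk into a graph on a subtype. -/
lemma exists_lift_walk {S : Set V} {L : SimpleGraph ↥S} {M : SimpleGraph V}
    (hAdj : ∀ a b : ↥S, M.Adj ↑a ↑b → L.Adj a b) :
    ∀ {x y : V} (w : M.Walk x y) (_ : ∀ z ∈ w.support, z ∈ S) (hx : x ∈ S) (hy : y ∈ S),
      ∃ w' : L.Walk ⟨x, hx⟩ ⟨y, hy⟩,
        w'.support.map Subtype.val = w.support ∧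
        w'.edges.map (Sym2.map Subtype.val) = w.edges := by
  intro x y w
  induction w with
  | nil =>
    intro hs hx hy
    exact ⟨SimpleGraph.Walk.nil, by simp, by simp⟩
  | @cons x z y h p ih =>
    intro hs hx hy
    have hz : z ∈ S := hs z (by simp [SimpleGraph.Walk.support_cons])
    obtain ⟨p', hp1, hp2⟩ := ih (fun u hu => hs u (by simp [SimpleGraph.Walk.support_cons, hu])) hz hy
    refine ⟨SimpleGraph.Walk.cons (hAdj ⟨x, hx⟩ ⟨z, hz⟩ h) p', ?_, ?_⟩
    · simp [SimpleGraph.Walk.support_cons, hp1]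
    · simp [SimpleGraph.Walk.edges_cons, hp2]

lemma lift_isCycle {S : Set V} {L : SimpleGraph ↥S} {M : SimpleGraph V}
    (hAdj : ∀ a b : ↥S, M.Adj ↑a ↑b → L.Adj a b)
    {v : V} (w : M.Walk v v) (hw : w.IsCycle) (hs : ∀ z ∈ w.support, z ∈ S) (hv : v ∈ S) :
    ∃ w' : L.Walk ⟨v, hv⟩ ⟨v, hv⟩, w'.IsCycle := by
  obtain ⟨w', hsup, hedg⟩ := exists_lift_walk hAdj w hs hv hv
  refine ⟨w', ?_, ?_⟩
  · constructor
    · constructor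
      exact List.Nodup.of_map _ (hedg ▸ hw.isCircuit.isTrail.edges_nodup)
    · intro hnil
      have hlen := congrArg List.length hsup
      rw [hnil] at hlen
      simp only [SimpleGraph.Walk.support_nil, List.length_map,
        SimpleGraph.Walk.length_support, List.length_cons, List.length_nil] at hlen
      have h3 := hw.isCircuit.three_le_length
      omega
  · have : w'.support.tail.map Subtype.val = w.support.tail := by
      rw [← hsup]; cases w'.support <;> simp
    exact List.Nodup.of_map _ (this ▸ hw.2)

lemma lift_reachable {S : Set V} {L : SimpleGraph ↥S} {M : SimpleGraph V}
    (hAdj : ∀ a b : ↥S, M.Adj ↑a ↑b → L.Adj a b)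
    (h2 : ∀ a b, M.Adj a b → a ∈ S) {a b : ↥S} (h : M.Reachable ↑a ↑b) : L.Reachable a b := by
  obtain ⟨w⟩ := h
  have hs : ∀ z ∈ w.support, z ∈ S := support_cond h2 w b.2
  obtain ⟨w', -, -⟩ := exists_lift_walk hAdj w hs a.2 b.2
  exact ⟨(by convert w' <;> simp)⟩

/-- upward: map along Subtype.val -/
lemma up_reachable {S : Set V} {L : SimpleGraph ↥S} {M : SimpleGraph V}
    (hAdj : ∀ a b : ↥S, L.Adj a b → M.Adj ↑a ↑b) {a b : ↥S} (h : L.Reachable a b) :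
    M.Reachable ↑a ↑b :=
  h.map ⟨Subtype.val, fun h' => hAdj _ _ h'⟩

lemma acyclic_transfer {S : Set V} {L : SimpleGraph ↥S} {M : SimpleGraph V}
    (h1 : ∀ a b : ↥S, M.Adj ↑a ↑b ↔ L.Adj a b) (h2 : ∀ a b, M.Adj a b → a ∈ S) :
    M.IsAcyclic ↔ L.IsAcyclic := by
  constructor
  · intro hM v c hc
    exact hM (c.map ⟨Subtype.val, fun h' => (h1 _ _).2 h'⟩)
      ((SimpleGraph.Walk.map_isCycle_iff_of_injective Subtype.val_injective).2 hc)
  · intro hL v c hc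
    have hv : v ∈ S := by
      have := hc.not_nil
      rw [SimpleGraph.Walk.not_nil_iff] at this
      obtain ⟨u, hadj, -⟩ := this
      exact h2 _ _ hadj
    have hs : ∀ z ∈ c.support, z ∈ S := support_cond h2 c hv
    obtain ⟨w', hw'⟩ := lift_isCycle (fun a b h => (h1 a b).1 h) c hc hs hv
    exact hL w' hw'

lemma fvs_transfer [Finite V] {S : Set V} {L : SimpleGraph ↥S} {M : SimpleGraph V}
    (h1 : ∀ a b : ↥S, M.Adj ↑a ↑b ↔ L.Adj a b) (h2 : ∀ a b, M.Adj a b → a ∈ S) :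
    fvs L = fvs M := by
  apply le_antisymm
  · obtain ⟨X, hX, hc⟩ := exists_fvs M
    have hfvs : IsFVS L {u : ↥S | ↑u ∈ X} := by
      have := (acyclic_transfer (M := graphRestrict M Xᶜ)
        (L := graphRestrict L {u : ↥S | ↑u ∈ X}ᶜ) ?_ ?_).1 hX
      · exact this
      · intro a b
        constructor
        · rintro ⟨hadj, ha, hb⟩
          exact ⟨(h1 a b).1 hadj, ha, hb⟩
        · rintro ⟨hadj, ha, hb⟩
          exact ⟨(h1 a b).2 hadj, ha, hb⟩
      · intro a b hadj
        exact h2 _ _ hadj.1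
    calc fvs L ≤ _ := fvs_le hfvs
      _ ≤ X.ncard := by
        have : Subtype.val '' {u : ↥S | ↑u ∈ X} ⊆ X := by rintro _ ⟨u, hu, rfl⟩; exact hu
        calc ({u : ↥S | ↑u ∈ X}).ncard = (Subtype.val '' {u : ↥S | ↑u ∈ X}).ncard :=
              (Set.ncard_image_of_injective _ Subtype.val_injective).symm
          _ ≤ X.ncard := Set.ncard_le_ncard this (Set.toFinite X)
      _ = fvs M := hc
  · obtain ⟨Y, hY, hc⟩ := exists_fvs L
    have hfvs : IsFVS M (Subtype.val '' Y) := by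
      have := (acyclic_transfer (M := graphRestrict M (Subtype.val '' Y)ᶜ)
        (L := graphRestrict L Yᶜ) ?_ ?_).2 hY
      · exact this
      · intro a b
        have hmem : ∀ u : ↥S, (↑u ∈ (Subtype.val '' Y)) ↔ u ∈ Y := by
          intro u
          constructor
          · rintro ⟨u', hu', he⟩
            rwa [Subtype.val_injective he] at hu'
          · intro hu; exact ⟨u, hu, rfl⟩
        constructor
        · rintro ⟨hadj, ha, hb⟩
          exact ⟨(h1 a b).1 hadj, fun hh => ha ((hmem a).2 hh), fun hh => hb ((hmem b).2 hh)⟩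
        · rintro ⟨hadj, ha, hb⟩
          exact ⟨(h1 a b).2 hadj, fun hh => ha ((hmem a).1 hh), fun hh => hb ((hmem b).1 hh)⟩
      · intro a b hadj
        exact h2 _ _ hadj.1
    calc fvs M ≤ (Subtype.val '' Y).ncard := fvs_le hfvs
      _ = Y.ncard := Set.ncard_image_of_injective _ Subtype.val_injective
      _ = fvs L := hc



lemma reachable_prop {M : SimpleGraph V} {P : V → Prop} (hP : ∀ a b, M.Adj a b → P a)
    {u v : V} (h : M.Reachable u v) (hv : P v) : P u := by
  obtain ⟨w⟩ := h
  exact support_cond hP w hv u w.start_mem_support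

lemma cmp_eq_or_disjoint {L : SimpleGraph V} (u v : V) :
    cmp L u = cmp L v ∨ Disjoint (cmp L u) (cmp L v) := by
  by_cases h : ∃ x, x ∈ cmp L u ∧ x ∈ cmp L v
  · obtain ⟨x, hxu, hxv⟩ := h
    exact Or.inl ((cmp_eq_of_mem hxu).symm.trans (cmp_eq_of_mem hxv))
  · push_neg at h
    exact Or.inr (Set.disjoint_left.2 fun a ha ha' => h a ha ha')

lemma cycle_transfer' {L L' : SimpleGraph V} {v : V} {O : L.Walk v v} (hO : O.IsCycle)
    (h : ∀ ⦃a b⦄, L.Adj a b → a ∈ O.support → b ∈ O.support → L'.Adj a b) :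
    ∃ O' : L'.Walk v v, O'.IsCycle ∧ O'.support = O.support := by
  have he : ∀ e ∈ O.edges, e ∈ L'.edgeSet := by
    intro e he
    induction e with
    | h a b =>
      have hadj : L.Adj a b := O.adj_of_mem_edges he
      have ha := SimpleGraph.Walk.fst_mem_support_of_mem_edges O he
      have hb := SimpleGraph.Walk.snd_mem_support_of_mem_edges O he
      exact (L'.mem_edgeSet).2 (h hadj ha hb)
  exact ⟨O.transfer L' he, hO.transfer he, SimpleGraph.Walk.support_transfer O he⟩

lemma cycle_support_restrict {L : SimpleGraph V} {S : Set V} {v : V}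
    {O : (graphRestrict L S).Walk v v} (hO : O.IsCycle) : ∀ z ∈ O.support, z ∈ S := by
  have hP : ∀ a b, (graphRestrict L S).Adj a b → a ∈ S := fun a b h => h.2.1
  have hv : v ∈ S := by
    obtain ⟨u, hadj, -, -⟩ := (SimpleGraph.Walk.not_nil_iff).1 hO.not_nil
    exact hadj.2.1
  exact support_cond hP O hv

lemma cycle_support_restrict2 {L : SimpleGraph V} {S T : Set V} {v : V}
    {O : (graphRestrict (graphRestrict L S) T).Walk v v} (hO : O.IsCycle) :
    (∀ z ∈ O.support, z ∈ S) ∧ (∀ z ∈ O.support, z ∈ T) := by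
  constructor
  · have hP : ∀ a b, (graphRestrict (graphRestrict L S) T).Adj a b → a ∈ S :=
      fun a b h => h.1.2.1
    have hv : v ∈ S := by
      obtain ⟨u, hadj, -, -⟩ := (SimpleGraph.Walk.not_nil_iff).1 hO.not_nil
      exact hadj.1.2.1
    exact support_cond hP O hv
  · exact cycle_support_restrict hO

lemma restrict2_to_restrict {L : SimpleGraph V} {S T U : Set V}
    (hsub : ∀ x, x ∈ S → x ∈ T → x ∈ U) {v : V}
    {O : (graphRestrict (graphRestrict L S) T).Walk v v} (hO : O.IsCycle) :
    ∃ O' : (graphRestrict L U).Walk v v, O'.IsCycle := by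
  obtain ⟨h1, h2⟩ := cycle_support_restrict2 hO
  have hadj : ∀ ⦃a b⦄, (graphRestrict (graphRestrict L S) T).Adj a b →
      a ∈ O.support → b ∈ O.support → (graphRestrict L U).Adj a b := by
    intro a b h ha hb
    exact ⟨h.1.1, hsub a (h1 a ha) (h2 a ha), hsub b (h1 b hb) (h2 b hb)⟩
  obtain ⟨O', hO', -⟩ := cycle_transfer' hO hadj
  exact ⟨O', hO'⟩

lemma isFVS_restrict_of_acyclic {M : SimpleGraph V} {A Y U : Set V}
    (hU : (graphRestrict M U).IsAcyclic) (hsub : ∀ x, x ∈ A → x ∉ Y → x ∈ U) :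
    IsFVS (graphRestrict M A) Y := by
  intro v O hO
  obtain ⟨O', hO'⟩ := restrict2_to_restrict (U := U) (fun x hA hT => hsub x hA hT) hO
  exact hU O' hO'

lemma cycle_in_or_out {L : SimpleGraph V} {A : Set V} (hA : compClosed L A) {v : V}
    (O : L.Walk v v) : (∀ x ∈ O.support, x ∈ A) ∨ (∀ x ∈ O.support, x ∉ A) := by
  by_cases hv : v ∈ A
  · exact Or.inl fun x hx => hA hv (support_subset_cmp O x hx)
  · refine Or.inr fun x hx hxA => hv (hA hxA (cmp_comm (support_subset_cmp O x hx)))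

lemma isFVS_split {M : SimpleGraph V} {A X Y : Set V} (hA : compClosed M A)
    (hX : IsFVS (graphRestrict M A) X) (hY : IsFVS (graphRestrict M Aᶜ) Y) :
    IsFVS M (X ∪ Y) := by
  intro v O hO
  have hsup : ∀ z ∈ O.support, z ∈ (X ∪ Y)ᶜ := cycle_support_restrict hO
  have hup : ∀ ⦃a b⦄, (graphRestrict M (X ∪ Y)ᶜ).Adj a b →
      a ∈ O.support → b ∈ O.support → M.Adj a b := fun a b h _ _ => h.1
  obtain ⟨O', hO', hOs⟩ := cycle_transfer' hO hup
  rcases cycle_in_or_out hA O' with hin | hout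
  · have hdown : ∀ ⦃a b⦄, M.Adj a b → a ∈ O'.support → b ∈ O'.support →
        (graphRestrict (graphRestrict M A) Xᶜ).Adj a b := by
      intro a b h ha hb
      exact ⟨⟨h, hin a ha, hin b hb⟩,
        fun hh => (hsup a (hOs ▸ ha)) (Or.inl hh), fun hh => (hsup b (hOs ▸ hb)) (Or.inl hh)⟩
    obtain ⟨O'', hO'', -⟩ := cycle_transfer' hO' hdown
    exact hX O'' hO''
  · have hdown : ∀ ⦃a b⦄, M.Adj a b → a ∈ O'.support → b ∈ O'.support →
        (graphRestrict (graphRestrict M Aᶜ) Yᶜ).Adj a b := by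
      intro a b h ha hb
      exact ⟨⟨h, hout a ha, hout b hb⟩,
        fun hh => (hsup a (hOs ▸ ha)) (Or.inr hh), fun hh => (hsup b (hOs ▸ hb)) (Or.inr hh)⟩
    obtain ⟨O'', hO'', -⟩ := cycle_transfer' hO' hdown
    exact hY O'' hO''

lemma isFVS_inter_of_isFVS {M : SimpleGraph V} {A X : Set V} (hX : IsFVS M X) :
    IsFVS (graphRestrict M A) (X ∩ A) := by
  intro v O hO
  have hsub : ∀ x, x ∈ A → x ∈ (X ∩ A)ᶜ → x ∈ Xᶜ := fun x hA hT hXx => hT ⟨hXx, hA⟩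
  obtain ⟨O', hO'⟩ := restrict2_to_restrict hsub hO
  exact hX O' hO'

lemma ifvs_of_min [Finite V] {M : SimpleGraph V} {C : Set V}
    (hC : IsFVS M C) (hmin : ∀ X : Set V, IsFVS M X → C.ncard ≤ X.ncard) :
    ∀ A : Set V, compClosed M A → fvs (graphRestrict M A) = (C ∩ A).ncard := by
  intro A hA
  apply le_antisymm
  · exact fvs_le (isFVS_restrict_of_acyclic hC (fun x hxA hx hxC => hx ⟨hxC, hxA⟩))
  · apply le_fvs
    intro X hX
    have hYfvs : IsFVS (graphRestrict M Aᶜ) (C \ A) :=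
      isFVS_restrict_of_acyclic hC (fun x hxA hx hxC => hx ⟨hxC, hxA⟩)
    have hfull : IsFVS M (X ∪ (C \ A)) := isFVS_split hA hX hYfvs
    have h1 := hmin _ hfull
    have h2 : (X ∪ (C \ A)).ncard ≤ X.ncard + (C \ A).ncard := Set.ncard_union_le _ _
    have h3 : (C ∩ A).ncard + (C \ A).ncard = C.ncard :=
      Set.ncard_inter_add_ncard_diff_eq_ncard C A (Set.toFinite C)
    omega

variable {G : SimpleGraph V}


variable {G : SimpleGraph V}

structure Good (G : SimpleGraph V) (C F : Set V) (z : ℕ) (K : G.Subgraph) : Prop where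
  vsub : K.verts ⊆ C ∪ F
  csub : C ⊆ K.verts
  cfvs : (graphRestrict K.spanningCoe Cᶜ).IsAcyclic
  ifvs : ∀ A : Set V, compClosed K.spanningCoe A →
           fvs (graphRestrict K.spanningCoe A) = (C ∩ A).ncard
  zbd : ∀ x : V, (C ∩ cmp K.spanningCoe x).ncard ≤ z

lemma deleteVerts_spanningCoe (K : G.Subgraph) (T : Set V) :
    (K.deleteVerts T).spanningCoe = graphRestrict K.spanningCoe Tᶜ := by
  ext u v
  rw [SimpleGraph.Subgraph.spanningCoe_adj, SimpleGraph.Subgraph.deleteVerts_adj]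
  constructor
  · rintro ⟨-, h1, -, h2, h3⟩
    exact ⟨h3, h1, h2⟩
  · rintro ⟨h3, h1, h2⟩
    exact ⟨h3.fst_mem, h1, h3.snd_mem, h2, h3⟩

/-- The trees of `K - C` (as subsets of `V`). -/
def trees (C : Set V) (K : G.Subgraph) : Set (Set V) :=
  {T | ∃ y, y ∈ K.verts ∧ y ∉ C ∧ T = cmp (graphRestrict K.spanningCoe Cᶜ) y}

lemma tree_subset {C : Set V} {K : G.Subgraph} {T : Set V} (hT : T ∈ trees C K) :
    T ⊆ K.verts ∧ T ∩ C = ∅ ∧ T.Nonempty := by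
  obtain ⟨y, hyv, hyC, rfl⟩ := hT
  have key : ∀ u ∈ cmp (graphRestrict K.spanningCoe Cᶜ) y, u ∈ K.verts ∧ u ∉ C := by
    intro u hu
    refine reachable_prop (M := graphRestrict K.spanningCoe Cᶜ)
      (P := fun x => x ∈ K.verts ∧ x ∉ C) ?_ hu ⟨hyv, hyC⟩
    intro a b hadj
    exact ⟨hadj.1.fst_mem, hadj.2.1⟩
  refine ⟨fun u hu => (key u hu).1, ?_, ⟨y, mem_cmp_self _ _⟩⟩
  ext x
  simp only [Set.mem_inter_iff, Set.mem_empty_iff_false, iff_false, not_and]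
  exact fun hx => (key x hx).2

/-- Neighbours of a tree, outside of it, lie in `C` (and are non-deleted). -/
lemma tree_boundary {C : Set V} {K : G.Subgraph} {T : Set V} (hT : T ∈ trees C K)
    {x w : V} (hx : x ∈ T) (hadj : K.spanningCoe.Adj x w) (hw : w ∉ T) : w ∈ C := by
  obtain ⟨y, hyv, hyC, rfl⟩ := hT
  by_contra hwC
  apply hw
  have hxC : x ∉ C := by
    have := (tree_subset ⟨y, hyv, hyC, rfl⟩).2.1
    intro hxc
    exact absurd (Set.mem_inter hx hxc) (by simp [this])
  have : (graphRestrict K.spanningCoe Cᶜ).Adj w x := ⟨hadj.symm, hwC, hxC⟩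
  exact (cmp_eq_of_mem hx) ▸ (adj_mem_cmp this)

/-- Walks within a tree. -/
lemma tree_walk {C : Set V} {K : G.Subgraph} {T : Set V} (hT : T ∈ trees C K)
    {a b : V} (ha : a ∈ T) (hb : b ∈ T) :
    ∃ w : (graphRestrict K.spanningCoe Cᶜ).Walk a b, ∀ x ∈ w.support, x ∈ T := by
  obtain ⟨y, hyv, hyC, rfl⟩ := hT
  have hr : (graphRestrict K.spanningCoe Cᶜ).Reachable a b := ha.trans hb.symm
  obtain ⟨w⟩ := hr
  exact ⟨w, fun x hx => (cmp_eq_of_mem hb) ▸ support_subset_cmp w x hx⟩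

lemma tree_compClosed {C : Set V} {K : G.Subgraph} {T : Set V} (hT : T ∈ trees C K) :
    compClosed (graphRestrict K.spanningCoe Cᶜ) T := by
  obtain ⟨y, hyv, hyC, rfl⟩ := hT
  exact compClosed_cmp _ _

/-- Maintenance of the invariant under removal of a removable tree. -/
lemma good_delete {C F : Set V} {z : ℕ} {K : G.Subgraph} (hK : Good G C F z K)
    [Finite V] {T : Set V} (hT : T ∈ trees C K)
    (hrem : C.ncard ≤ fvs (graphRestrict K.spanningCoe Tᶜ)) :
    Good G C F z (K.deleteVerts T) := by
  have hTC : T ∩ C = ∅ := (tree_subset hT).2.1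
  have hsp := deleteVerts_spanningCoe K T
  have hle : (K.deleteVerts T).spanningCoe ≤ K.spanningCoe := by
    rw [hsp]; exact gr_le _ _
  have hCsub : C ⊆ (K.deleteVerts T).verts := by
    rw [SimpleGraph.Subgraph.deleteVerts_verts]
    intro c hc
    refine ⟨hK.csub hc, fun hcT => ?_⟩
    exact absurd (Set.mem_inter hcT hc) (by simp [hTC])
  have hcfvs : (graphRestrict (K.deleteVerts T).spanningCoe Cᶜ).IsAcyclic := by
    exact acyclic_anti (gr_mono_left hle Cᶜ) hK.cfvs
  constructor
  · rw [SimpleGraph.Subgraph.deleteVerts_verts]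
    exact fun x hx => hK.vsub hx.1
  · exact hCsub
  · exact hcfvs
  · intro A hA
    refine ifvs_of_min hcfvs (fun X hX => ?_) A hA
    have : fvs (graphRestrict K.spanningCoe Tᶜ) ≤ X.ncard := by
      rw [← hsp]; exact fvs_le hX
    omega
  · intro x
    refine le_trans (Set.ncard_le_ncard ?_ (Set.toFinite _)) (hK.zbd x)
    exact Set.inter_subset_inter_right _ (cmp_mono hle x)

lemma gr_univ (M : SimpleGraph V) : graphRestrict M univ = M := by
  ext u v
  exact ⟨fun h => h.1, fun h => ⟨h, trivial, trivial⟩⟩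

lemma gr_gr' (G : SimpleGraph V) (S T : Set V) :
    graphRestrict (graphRestrict G S) T = graphRestrict G (S ∩ T) := by
  ext u v
  constructor
  · rintro ⟨⟨h, hs, hs'⟩, ht, ht'⟩; exact ⟨h, ⟨hs, ht⟩, ⟨hs', ht'⟩⟩
  · rintro ⟨h, ⟨hs, ht⟩, hs', ht'⟩; exact ⟨⟨h, hs, hs'⟩, ht, ht'⟩

lemma fvs_good [Finite V] {C F : Set V} {z : ℕ} {K : G.Subgraph} (hK : Good G C F z K) :
    fvs K.spanningCoe = C.ncard := by
  have := hK.ifvs univ (compClosed_univ _)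
  rwa [gr_univ, Set.inter_univ] at this

lemma prune [Finite V] {C F : Set V} {z : ℕ} :
    ∀ n (K : G.Subgraph), K.verts.ncard ≤ n → Good G C F z K →
    ∃ K' : G.Subgraph, Good G C F z K' ∧
      ∀ T ∈ trees C K', fvs (graphRestrict K'.spanningCoe Tᶜ) < C.ncard := by
  intro n
  induction n with
  | zero =>
    intro K hcard hK
    refine ⟨K, hK, fun T hT => ?_⟩
    obtain ⟨y, hyv, -, -⟩ := hT
    have : K.verts.Nonempty := ⟨y, hyv⟩
    have := Set.ncard_pos (Set.toFinite _) |>.2 this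
    omega
  | succ n ih =>
    intro K hcard hK
    by_cases h : ∃ T ∈ trees C K, C.ncard ≤ fvs (graphRestrict K.spanningCoe Tᶜ)
    · obtain ⟨T, hT, hrem⟩ := h
      have hlt : (K.deleteVerts T).verts.ncard ≤ n := by
        obtain ⟨hsub, -, hne⟩ := tree_subset hT
        obtain ⟨y, hy⟩ := hne
        have hss : (K.deleteVerts T).verts ⊂ K.verts := by
          rw [SimpleGraph.Subgraph.deleteVerts_verts]
          refine ⟨Set.diff_subset, fun hcon => ?_⟩
          exact (hcon (hsub hy)).2 hy
        have := Set.ncard_lt_ncard hss (Set.toFinite _)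
        omega
      exact ih (K.deleteVerts T) hlt (good_delete hK hT hrem)
    · push_neg at h
      exact ⟨K, hK, h⟩

lemma witness [Finite V] {C F : Set V} {z : ℕ} {K : G.Subgraph} (hK : Good G C F z K)
    {T : Set V} (hT : T ∈ trees C K)
    (hnr : fvs (graphRestrict K.spanningCoe Tᶜ) < C.ncard)
    {y0 : V} (hy0 : y0 ∈ T) :
    ∃ X : Set V, IsFVS (graphRestrict K.spanningCoe Tᶜ) X ∧
      X.ncard + 1 ≤ C.ncard ∧
      (X ∩ cmp K.spanningCoe y0).ncard + 1 ≤ (C ∩ cmp K.spanningCoe y0).ncard := by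
  classical
  set W := cmp K.spanningCoe y0 with hW
  set M := graphRestrict K.spanningCoe Tᶜ with hM
  have hTsubW : T ⊆ W := by
    intro x hx
    refine cmp_mono (gr_le _ _) _ (?_ : x ∈ cmp (graphRestrict K.spanningCoe Cᶜ) y0)
    obtain ⟨y, hyv, hyC, hTeq⟩ := hT
    have h1 : cmp (graphRestrict K.spanningCoe Cᶜ) x = T := by
      rw [hTeq] at hx ⊢; exact cmp_eq_of_mem hx
    have h2 : cmp (graphRestrict K.spanningCoe Cᶜ) y0 = T := by
      rw [hTeq] at hy0 ⊢; exact cmp_eq_of_mem hy0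
    rw [h2, ← h1]
    exact mem_cmp_self _ _
  have hTCempty : T ∩ C = ∅ := (tree_subset hT).2.1
  have hWT : compClosed M (W \ T) := by
    intro x hx u hu
    have huW : u ∈ W := by
      have h1 : u ∈ cmp K.spanningCoe x := cmp_mono (by rw [hM]; exact gr_le _ _) _ hu
      have h2 : cmp K.spanningCoe x = W := cmp_eq_of_mem hx.1
      rwa [h2] at h1
    refine ⟨huW, ?_⟩
    refine reachable_prop (M := M) (P := fun a => a ∉ T) ?_ hu hx.2
    intro a b hadj
    exact hadj.2.1
  have hWc : compClosed K.spanningCoe Wᶜ := compClosed_compl (compClosed_cmp _ _)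
  -- the inner fvs bound
  set m := fvs (graphRestrict M (W \ T)) with hm
  have hmbound : m + 1 ≤ (C ∩ W).ncard := by
    by_contra hcon
    push_neg at hcon
    obtain ⟨Xf, hXf, hXfc⟩ := exists_fvs M
    have h1 : m ≤ (Xf ∩ (W \ T)).ncard := fvs_le (isFVS_inter_of_isFVS hXf)
    have hgreq : graphRestrict M Wᶜ = graphRestrict K.spanningCoe Wᶜ := by
      rw [hM, gr_gr']
      congr 1
      ext x
      simp only [Set.mem_inter_iff, Set.mem_compl_iff]
      exact ⟨fun h => h.2, fun h => ⟨fun hxT => h (hTsubW hxT), h⟩⟩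
    have h2 : (C ∩ Wᶜ).ncard ≤ (Xf ∩ Wᶜ).ncard := by
      have := fvs_le (isFVS_inter_of_isFVS (A := Wᶜ) hXf)
      rw [hgreq] at this
      rw [← hK.ifvs Wᶜ hWc]
      exact this
    have h3 : (Xf ∩ (W \ T)).ncard + (Xf ∩ Wᶜ).ncard ≤ Xf.ncard := by
      rw [← Set.ncard_union_eq ?_ (Set.toFinite _) (Set.toFinite _)]
      · exact Set.ncard_le_ncard (by intro x hx; rcases hx with h | h <;> exact h.1)
          (Set.toFinite _)
      · refine Set.disjoint_of_subset (Set.inter_subset_right.trans Set.diff_subset)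
          Set.inter_subset_right ?_
        exact disjoint_compl_right
    have h4 : (C ∩ W).ncard + (C ∩ Wᶜ).ncard = C.ncard := by
      have := Set.ncard_inter_add_ncard_diff_eq_ncard C W (Set.toFinite C)
      rwa [Set.diff_eq] at this
    omega
  obtain ⟨Y, hY, hYc⟩ := exists_fvs (graphRestrict M (W \ T))
  set Y' := Y ∩ (W \ T) with hY'
  have hY'fvs : IsFVS (graphRestrict M (W \ T)) Y' := by
    rw [IsFVS, gr_gr'] at hY ⊢
    refine acyclic_anti (gr_mono_right _ ?_) hY
    rintro x ⟨hx1, hx2⟩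
    exact ⟨hx1, fun hxY => hx2 ⟨hxY, hx1⟩⟩
  set X := Y' ∪ (C \ W) with hX
  have hXfvs : IsFVS M X := by
    refine isFVS_split hWT hY'fvs ?_
    refine isFVS_restrict_of_acyclic (U := Cᶜ) ?_ ?_
    · rw [hM, gr_gr']
      exact acyclic_anti (gr_mono_right _ Set.inter_subset_right) hK.cfvs
    · intro x hx1 hx2 hxC
      by_cases hxW : x ∈ W
      · refine hx1 ⟨hxW, fun hxT => ?_⟩
        exact absurd (Set.mem_inter hxT hxC) (by simp [hTCempty])
      · exact hx2 ⟨hxC, hxW⟩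
  have hXW : X ∩ W ⊆ Y' := by
    rintro x ⟨hx1, hx2⟩
    rcases hx1 with h | h
    · exact h
    · exact absurd hx2 h.2
  have hY'le : Y'.ncard ≤ m := by
    rw [hm, ← hYc]
    exact Set.ncard_le_ncard Set.inter_subset_left (Set.toFinite _)
  refine ⟨X, hXfvs, ?_, ?_⟩
  · have h5 : X.ncard ≤ Y'.ncard + (C \ W).ncard := Set.ncard_union_le _ _
    have h4 : (C ∩ W).ncard + (C \ W).ncard = C.ncard :=
      Set.ncard_inter_add_ncard_diff_eq_ncard C W (Set.toFinite C)
    omega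
  · have h6 : (X ∩ W).ncard ≤ Y'.ncard := Set.ncard_le_ncard hXW (Set.toFinite _)
    omega

lemma not_acyclic_of_lt_fvs' {M : SimpleGraph V} {X : Set V} (h : X.ncard < fvs M) :
    ¬ (graphRestrict M Xᶜ).IsAcyclic := fun ha => absurd (fvs_le ha) (not_le.2 h)

/-- Extraction of two distinct boundary edges of a non-removable tree avoiding the witness. -/
lemma extract_pair [Finite V] {C F : Set V} {z : ℕ} {K : G.Subgraph} (hK : Good G C F z K)
    {T : Set V} (hT : T ∈ trees C K) {X : Set V}
    (hX : IsFVS (graphRestrict K.spanningCoe Tᶜ) X) (hXc : X.ncard < C.ncard) :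
    ∃ p q a b : V, p ∈ C ∧ q ∈ C ∧ p ∉ X ∧ q ∉ X ∧ a ∈ T ∧ b ∈ T ∧
      K.spanningCoe.Adj a p ∧ K.spanningCoe.Adj b q ∧ s(a,p) ≠ s(b,q) := by
  classical
  have hTCempty : T ∩ C = ∅ := (tree_subset hT).2.1
  have hfull : fvs K.spanningCoe = C.ncard := fvs_good hK
  have hnotac : ¬ (graphRestrict K.spanningCoe Xᶜ).IsAcyclic :=
    not_acyclic_of_lt_fvs' (hfull ▸ hXc)
  rw [SimpleGraph.isAcyclic_iff_path_unique] at hnotac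
  -- produce a cycle
  have hcyc : ∃ (v : V) (O : (graphRestrict K.spanningCoe Xᶜ).Walk v v), O.IsCycle := by
    by_contra hcon
    push_neg at hcon
    exact hnotac (SimpleGraph.isAcyclic_iff_path_unique.1 (fun v O hO => hcon v O hO))
  obtain ⟨v, O, hO⟩ := hcyc
  -- the cycle meets T
  have hOT : ∃ x ∈ O.support, x ∈ T := by
    by_contra hcon
    push_neg at hcon
    have hadj : ∀ ⦃a b⦄, (graphRestrict K.spanningCoe Xᶜ).Adj a b →
        a ∈ O.support → b ∈ O.support →
        (graphRestrict (graphRestrict K.spanningCoe Tᶜ) Xᶜ).Adj a b := by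
      intro a b h ha hb
      exact ⟨⟨h.1, hcon a ha, hcon b hb⟩, h.2.1, h.2.2⟩
    obtain ⟨O', hO', -⟩ := cycle_transfer' hO hadj
    exact hX O' hO'
  -- the cycle leaves T
  have hOnT : ∃ x ∈ O.support, x ∉ T := by
    by_contra hcon
    push_neg at hcon
    have hadj : ∀ ⦃a b⦄, (graphRestrict K.spanningCoe Xᶜ).Adj a b →
        a ∈ O.support → b ∈ O.support →
        (graphRestrict K.spanningCoe Cᶜ).Adj a b := by
      intro a b h ha hb
      refine ⟨h.1, fun hc => ?_, fun hc => ?_⟩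
      · exact absurd (Set.mem_inter (hcon a ha) hc) (by simp [hTCempty])
      · exact absurd (Set.mem_inter (hcon b hb) hc) (by simp [hTCempty])
    obtain ⟨O', hO', -⟩ := cycle_transfer' hO hadj
    exact hK.cfvs O' hO'
  obtain ⟨x, hxs, hxT⟩ := hOT
  obtain ⟨y', hys, hyT⟩ := hOnT
  -- two boundary darts
  have hdarts : ∃ dOut dIn : (graphRestrict K.spanningCoe Xᶜ).Dart,
      dOut ∈ O.darts ∧ dIn ∈ O.darts ∧
      dOut.fst ∈ T ∧ dOut.snd ∉ T ∧ dIn.fst ∉ T ∧ dIn.snd ∈ T := by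
    by_cases hvT : v ∈ T
    · obtain ⟨d1, hd1, hd1f, hd1s⟩ := (O.takeUntil y' hys).exists_boundary_dart T hvT hyT
      obtain ⟨d2, hd2, hd2f, hd2s⟩ := (O.dropUntil y' hys).exists_boundary_dart Tᶜ hyT
        (by simpa using hvT)
      refine ⟨d1, d2, O.darts_takeUntil_subset hys hd1, O.darts_dropUntil_subset hys hd2,
        hd1f, hd1s, hd2f, by simpa using hd2s⟩
    · obtain ⟨d2, hd2, hd2f, hd2s⟩ := (O.takeUntil x hxs).exists_boundary_dart Tᶜ
        (by simpa using hvT) (by simpa using hxT)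
      obtain ⟨d1, hd1, hd1f, hd1s⟩ := (O.dropUntil x hxs).exists_boundary_dart T hxT hvT
      refine ⟨d1, d2, O.darts_dropUntil_subset hxs hd1, O.darts_takeUntil_subset hxs hd2,
        hd1f, hd1s, hd2f, by simpa using hd2s⟩
  obtain ⟨dOut, dIn, hdO, hdI, haT, hpT, hqT, hbT⟩ := hdarts
  set a := dOut.fst
  set p := dOut.snd
  set q := dIn.fst
  set b := dIn.snd
  have hadjO : (graphRestrict K.spanningCoe Xᶜ).Adj a p := dOut.adj
  have hadjI : (graphRestrict K.spanningCoe Xᶜ).Adj q b := dIn.adj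
  have hpC : p ∈ C := tree_boundary hT haT hadjO.1 hpT
  have hqC : q ∈ C := tree_boundary hT hbT hadjI.1.symm hqT
  refine ⟨p, q, a, b, hpC, hqC, hadjO.2.2, hadjI.2.1, haT, hbT, hadjO.1, hadjI.1.symm, ?_⟩
  intro heq
  rw [Sym2.eq_iff] at heq
  have hab : a = b ∧ p = q := by
    rcases heq with ⟨h1, h2⟩ | ⟨h1, h2⟩
    · exact ⟨h1, h2⟩
    · exact (hqT (h1 ▸ haT)).elim
  -- same edge means the two darts are equal or symmetric; derive contradiction via nodup edges
  have hedges : dOut.edge = dIn.edge := by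
    show s(a, p) = s(q, b)
    rw [Sym2.eq_iff]
    exact Or.inr ⟨hab.1, hab.2⟩
  have hne : dOut ≠ dIn := by
    intro hcon
    have haq : a = q := congrArg (fun d => d.toProd.1) hcon
    exact hqT (haq ▸ haT)
  have hnodup : (O.darts.map SimpleGraph.Dart.edge).Nodup := hO.edges_nodup
  exact hne (List.inj_on_of_nodup_map hnodup hdO hdI hedges)

lemma trees_ne_disjoint {C : Set V} {K : G.Subgraph} {S S' : Set V}
    (hS : S ∈ trees C K) (hS' : S' ∈ trees C K) (hne : S ≠ S') : Disjoint S S' := by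
  obtain ⟨y, -, -, rfl⟩ := hS
  obtain ⟨y', -, -, rfl⟩ := hS'
  rcases cmp_eq_or_disjoint (L := graphRestrict K.spanningCoe Cᶜ) y y' with h | h
  · exact absurd h hne
  · exact h

lemma walk_transfer' {L L' : SimpleGraph V} {a b : V} (w : L.Walk a b)
    (h : ∀ ⦃x y⦄, L.Adj x y → x ∈ w.support → y ∈ w.support → L'.Adj x y) :
    ∃ w' : L'.Walk a b, w'.support = w.support := by
  have he : ∀ e ∈ w.edges, e ∈ L'.edgeSet := by
    intro e he
    induction e with
    | h x y =>
      have hadj : L.Adj x y := w.adj_of_mem_edges he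
      have hx := SimpleGraph.Walk.fst_mem_support_of_mem_edges w he
      have hy := SimpleGraph.Walk.snd_mem_support_of_mem_edges w he
      exact (L'.mem_edgeSet).2 (h hadj hx hy)
  exact ⟨w.transfer L' he, SimpleGraph.Walk.support_transfer w he⟩

lemma mem_C_not_mem_tree {C : Set V} {K : G.Subgraph} {S : Set V}
    (hS : S ∈ trees C K) {p : V} (hp : p ∈ C) : p ∉ S := by
  intro hmem
  exact absurd (Set.mem_inter hmem hp) (by simp [(tree_subset hS).2.1])

/-- a path inside a tree, in the ambient graph `K - S₀ - X₀`. -/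
lemma tree_path_in {C : Set V} {K : G.Subgraph} {S₀ S : Set V}
    (hS : S ∈ trees C K) (hdisj : Disjoint S S₀) (hSX : S ∩ X₀ = ∅)
    {a b : V} (ha : a ∈ S) (hb : b ∈ S) :
    ∃ w : (graphRestrict K.spanningCoe (S₀ᶜ ∩ X₀ᶜ)).Walk a b,
      w.IsPath ∧ ∀ x ∈ w.support, x ∈ S := by
  classical
  obtain ⟨w, hw⟩ := tree_walk hS ha hb
  have hadj : ∀ ⦃x y⦄, (graphRestrict K.spanningCoe Cᶜ).Adj x y →
      x ∈ w.support → y ∈ w.support →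
      (graphRestrict K.spanningCoe (S₀ᶜ ∩ X₀ᶜ)).Adj x y := by
    intro x y hxy hx hy
    refine ⟨hxy.1, ⟨fun hc => (Set.disjoint_left.1 hdisj) (hw x hx) hc, fun hc => ?_⟩,
      ⟨fun hc => (Set.disjoint_left.1 hdisj) (hw y hy) hc, fun hc => ?_⟩⟩
    · exact absurd (Set.mem_inter (hw x hx) hc) (by simp [hSX])
    · exact absurd (Set.mem_inter (hw y hy) hc) (by simp [hSX])
  obtain ⟨w', hw's⟩ := walk_transfer' w hadj
  refine ⟨(w'.toPath : _).1, (w'.toPath : _).2, fun x hx => ?_⟩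
  have := SimpleGraph.Walk.support_toPath_subset w' hx
  rw [hw's] at this
  exact hw x this

/-- Diagonal two-paths contradiction: a tree with two edges to the same vertex `p`,
not touched by `X₀` and different from `S₀`, contradicts acyclicity of `K - S₀ - X₀`. -/
lemma two_path_diag {C : Set V} {K : G.Subgraph} {S₀ S X₀ : Set V}
    (hacy : (graphRestrict K.spanningCoe (S₀ᶜ ∩ X₀ᶜ)).IsAcyclic)
    (hS : S ∈ trees C K) (hS₀ : S₀ ∈ trees C K) (hne : S ≠ S₀) (hSX : S ∩ X₀ = ∅)
    {p a b : V} (hp : p ∈ C) (hpX : p ∉ X₀) (ha : a ∈ S) (hb : b ∈ S) (hab : a ≠ b)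
    (hadja : K.spanningCoe.Adj a p) (hadjb : K.spanningCoe.Adj b p) : False := by
  classical
  have hdisj : Disjoint S S₀ := trees_ne_disjoint hS hS₀ hne
  obtain ⟨π, hπp, hπs⟩ := tree_path_in hS hdisj hSX ha hb
  have hpS : p ∉ S := mem_C_not_mem_tree hS hp
  have hpS₀ : p ∉ S₀ := mem_C_not_mem_tree hS₀ hp
  have haS₀ : a ∉ S₀ := fun hc => (Set.disjoint_left.1 hdisj) ha hc
  have hbS₀ : b ∉ S₀ := fun hc => (Set.disjoint_left.1 hdisj) hb hc
  have haX : a ∉ X₀ := fun hc => absurd (Set.mem_inter ha hc) (by simp [hSX])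
  have hbX : b ∉ X₀ := fun hc => absurd (Set.mem_inter hb hc) (by simp [hSX])
  have hA1 : (graphRestrict K.spanningCoe (S₀ᶜ ∩ X₀ᶜ)).Adj a p :=
    ⟨hadja, ⟨haS₀, haX⟩, ⟨hpS₀, hpX⟩⟩
  have hA2 : (graphRestrict K.spanningCoe (S₀ᶜ ∩ X₀ᶜ)).Adj p b :=
    ⟨hadjb.symm, ⟨hpS₀, hpX⟩, ⟨hbS₀, hbX⟩⟩
  have hap : a ≠ p := fun hc => hpS (hc ▸ ha)
  have hbp : b ≠ p := fun hc => hpS (hc ▸ hb)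
  set π₂ : (graphRestrict K.spanningCoe (S₀ᶜ ∩ X₀ᶜ)).Walk a b :=
    SimpleGraph.Walk.cons hA1 (SimpleGraph.Walk.cons hA2 SimpleGraph.Walk.nil) with hπ₂
  have hπ₂p : π₂.IsPath := by
    rw [SimpleGraph.Walk.isPath_def, hπ₂]
    simp [SimpleGraph.Walk.support_cons, hap, hbp, hab, Ne.symm hbp]
  have := hacy.path_unique ⟨π, hπp⟩ ⟨π₂, hπ₂p⟩
  have hsupeq : π.support = π₂.support := by
    rw [show π = (⟨π, hπp⟩ : (graphRestrict K.spanningCoe (S₀ᶜ ∩ X₀ᶜ)).Path a b).1 from rfl,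
      this]
  have hpmem : p ∈ π.support := by
    rw [hsupeq, hπ₂]
    simp [SimpleGraph.Walk.support_cons]
  exact hpS (hπs p hpmem)

/-- A path from `p` to `q` through a tree `S`, inside `K - S₀ - X₀`. -/
lemma through_path {C : Set V} {K : G.Subgraph} {S₀ S X₀ : Set V}
    (hS : S ∈ trees C K) (hS₀ : S₀ ∈ trees C K) (hne : S ≠ S₀) (hSX : S ∩ X₀ = ∅)
    {p q a b : V} (hp : p ∈ C) (hq : q ∈ C) (hpq : p ≠ q) (hpX : p ∉ X₀) (hqX : q ∉ X₀)
    (ha : a ∈ S) (hb : b ∈ S)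
    (hadja : K.spanningCoe.Adj a p) (hadjb : K.spanningCoe.Adj b q) :
    ∃ w : (graphRestrict K.spanningCoe (S₀ᶜ ∩ X₀ᶜ)).Walk p q,
      w.IsPath ∧ (∀ x ∈ w.support, x = p ∨ x = q ∨ x ∈ S) ∧ a ∈ w.support := by
  classical
  have hdisj : Disjoint S S₀ := trees_ne_disjoint hS hS₀ hne
  obtain ⟨π, hπp, hπs⟩ := tree_path_in hS hdisj hSX ha hb
  have hpS : p ∉ S := mem_C_not_mem_tree hS hp
  have hqS : q ∉ S := mem_C_not_mem_tree hS hq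
  have hpS₀ : p ∉ S₀ := mem_C_not_mem_tree hS₀ hp
  have hqS₀ : q ∉ S₀ := mem_C_not_mem_tree hS₀ hq
  have hmemS : ∀ x ∈ S, x ∈ S₀ᶜ ∩ X₀ᶜ := by
    intro x hx
    refine ⟨fun hc => (Set.disjoint_left.1 hdisj) hx hc, fun hc => ?_⟩
    exact absurd (Set.mem_inter hx hc) (by simp [hSX])
  have hA1 : (graphRestrict K.spanningCoe (S₀ᶜ ∩ X₀ᶜ)).Adj p a :=
    ⟨hadja.symm, ⟨hpS₀, hpX⟩, hmemS a ha⟩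
  have hA2 : (graphRestrict K.spanningCoe (S₀ᶜ ∩ X₀ᶜ)).Adj b q :=
    ⟨hadjb, hmemS b hb, ⟨hqS₀, hqX⟩⟩
  set τ := π.append (SimpleGraph.Walk.cons hA2 SimpleGraph.Walk.nil) with hτ
  have hτsup : τ.support = π.support ++ [q] := by
    rw [hτ, SimpleGraph.Walk.support_append]
    simp [SimpleGraph.Walk.support_cons]
  set full := SimpleGraph.Walk.cons hA1 τ with hfull
  have hfullsup : full.support = p :: (π.support ++ [q]) := by
    rw [hfull, SimpleGraph.Walk.support_cons, hτsup]
  have hπnodup : π.support.Nodup := hπp.support_nodup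
  have hqπ : q ∉ π.support := fun hc => hqS (hπs q hc)
  have hpπ : p ∉ π.support := fun hc => hpS (hπs p hc)
  refine ⟨full, ?_, ?_, ?_⟩
  · rw [SimpleGraph.Walk.isPath_def, hfullsup]
    refine List.Nodup.cons ?_ ?_
    · intro hc
      rcases List.mem_append.1 hc with h | h
      · exact hpπ h
      · simp at h; exact hpq h
    · rw [List.nodup_append]
      refine ⟨hπnodup, List.nodup_singleton _, fun x hx => ?_⟩
      simp only [List.mem_singleton, forall_eq]
      intro hc
      exact hqπ (hc ▸ hx)
  · intro x hx
    rw [hfullsup] at hx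
    rcases List.mem_cons.1 hx with h | h
    · exact Or.inl h
    · rcases List.mem_append.1 h with h2 | h2
      · exact Or.inr (Or.inr (hπs x h2))
      · simp at h2; exact Or.inr (Or.inl h2)
  · rw [hfullsup]
    exact List.mem_cons_of_mem _ (List.mem_append_left _ π.start_mem_support)

lemma two_path_offdiag {C : Set V} {K : G.Subgraph} {S₀ S S' X₀ : Set V}
    (hacy : (graphRestrict K.spanningCoe (S₀ᶜ ∩ X₀ᶜ)).IsAcyclic)
    (hS : S ∈ trees C K) (hS' : S' ∈ trees C K) (hS₀ : S₀ ∈ trees C K)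
    (hSS' : S ≠ S') (hne : S ≠ S₀) (hne' : S' ≠ S₀)
    (hSX : S ∩ X₀ = ∅) (hS'X : S' ∩ X₀ = ∅)
    {p q a b a' b' : V} (hp : p ∈ C) (hq : q ∈ C) (hpq : p ≠ q) (hpX : p ∉ X₀) (hqX : q ∉ X₀)
    (ha : a ∈ S) (hb : b ∈ S) (ha' : a' ∈ S') (hb' : b' ∈ S')
    (hadja : K.spanningCoe.Adj a p) (hadjb : K.spanningCoe.Adj b q)
    (hadja' : K.spanningCoe.Adj a' p) (hadjb' : K.spanningCoe.Adj b' q) : False := by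
  obtain ⟨w1, hw1p, hw1s, haw1⟩ :=
    through_path hS hS₀ hne hSX hp hq hpq hpX hqX ha hb hadja hadjb
  obtain ⟨w2, hw2p, hw2s, -⟩ :=
    through_path hS' hS₀ hne' hS'X hp hq hpq hpX hqX ha' hb' hadja' hadjb'
  have := hacy.path_unique ⟨w1, hw1p⟩ ⟨w2, hw2p⟩
  have hsupeq : w1.support = w2.support := by
    rw [show w1 = (⟨w1, hw1p⟩ : (graphRestrict K.spanningCoe (S₀ᶜ ∩ X₀ᶜ)).Path p q).1 from rfl,
      this]
  have haw2 : a ∈ w2.support := hsupeq ▸ haw1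
  rcases hw2s a haw2 with h | h | h
  · exact mem_C_not_mem_tree hS hp (h ▸ ha)
  · exact mem_C_not_mem_tree hS hq (h ▸ ha)
  · exact (Set.disjoint_left.1 (trees_ne_disjoint hS hS' hSS')) ha h

lemma tree_cmp_const {C : Set V} {K : G.Subgraph} {T : Set V} (hT : T ∈ trees C K)
    {y y' : V} (hy : y ∈ T) (hy' : y' ∈ T) :
    cmp K.spanningCoe y = cmp K.spanningCoe y' := by
  obtain ⟨y0, -, -, rfl⟩ := hT
  have h1 : y ∈ cmp K.spanningCoe y0 := cmp_mono (gr_le _ _) _ hy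
  have h2 : y' ∈ cmp K.spanningCoe y0 := cmp_mono (gr_le _ _) _ hy'
  rw [cmp_eq_of_mem h1, cmp_eq_of_mem h2]

lemma tree_sub_cmp {C : Set V} {K : G.Subgraph} {T : Set V} (hT : T ∈ trees C K)
    {a p : V} (ha : a ∈ T) (hadj : K.spanningCoe.Adj a p) : T ⊆ cmp K.spanningCoe p := by
  intro x hx
  have h1 : x ∈ cmp K.spanningCoe a := by
    rw [← tree_cmp_const hT hx ha]; exact mem_cmp_self _ _
  have h2 : a ∈ cmp K.spanningCoe p := adj_mem_cmp hadj
  rw [cmp_eq_of_mem h2] at h1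
  exact h1

lemma label_data [Finite V] [Nonempty V] {C F : Set V} {z : ℕ} {K : G.Subgraph}
    (hK : Good G C F z K)
    (hterm : ∀ T ∈ trees C K, fvs (graphRestrict K.spanningCoe Tᶜ) < C.ncard) :
    ∃ (fX : Set V → Set V) (fp fq fa fb : Set V → V),
      ∀ T, T ∈ trees C K →
        IsFVS (graphRestrict K.spanningCoe Tᶜ) (fX T) ∧
        (∀ y ∈ T, ((fX T) ∩ cmp K.spanningCoe y).ncard + 1 ≤ (C ∩ cmp K.spanningCoe y).ncard) ∧
        fp T ∈ C ∧ fq T ∈ C ∧ fp T ∉ fX T ∧ fq T ∉ fX T ∧ fa T ∈ T ∧ fb T ∈ T ∧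
        K.spanningCoe.Adj (fa T) (fp T) ∧ K.spanningCoe.Adj (fb T) (fq T) ∧
        s(fa T, fp T) ≠ s(fb T, fq T) := by
  classical
  have key : ∀ T : Set V, ∃ (X : Set V) (p q a b : V), T ∈ trees C K →
      IsFVS (graphRestrict K.spanningCoe Tᶜ) X ∧
      (∀ y ∈ T, (X ∩ cmp K.spanningCoe y).ncard + 1 ≤ (C ∩ cmp K.spanningCoe y).ncard) ∧
      p ∈ C ∧ q ∈ C ∧ p ∉ X ∧ q ∉ X ∧ a ∈ T ∧ b ∈ T ∧
      K.spanningCoe.Adj a p ∧ K.spanningCoe.Adj b q ∧ s(a, p) ≠ s(b, q) := by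
    intro T
    by_cases hT : T ∈ trees C K
    · obtain ⟨-, -, y0, hy0⟩ := tree_subset hT
      obtain ⟨X, hX1, hX2, hX3⟩ := witness hK hT (hterm T hT) hy0
      obtain ⟨p, q, a, b, h1, h2, h3, h4, h5, h6, h7, h8, h9⟩ :=
        extract_pair hK hT hX1 (by omega)
      refine ⟨X, p, q, a, b, fun _ => ⟨hX1, ?_, h1, h2, h3, h4, h5, h6, h7, h8, h9⟩⟩
      intro y hy
      rwa [tree_cmp_const hT hy hy0]
    · exact ⟨∅, Classical.arbitrary V, Classical.arbitrary V, Classical.arbitrary V,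
        Classical.arbitrary V, fun hc => absurd hc hT⟩
  choose fX fp fq fa fb hf using key
  exact ⟨fX, fp, fq, fa, fb, fun T hT => hf T hT⟩

lemma touched_count [Finite V] {C : Set V} {K : G.Subgraph} {W X₀ : Set V}
    {U : Set (Set V)}
    (h1 : ∀ S ∈ U, S ∈ trees C K) (h2 : ∀ S ∈ U, S ⊆ W)
    (h3 : ∀ S ∈ U, (S ∩ X₀).Nonempty) :
    U.ncard ≤ (X₀ ∩ W).ncard := by
  classical
  rcases U.eq_empty_or_nonempty with rfl | ⟨S1, hS1⟩
  · simp
  · have : Nonempty V := ⟨(h3 S1 hS1).some⟩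
    set f : Set V → V := fun S => Classical.epsilon (fun x => x ∈ S ∩ X₀) with hf
    have hfspec : ∀ S ∈ U, f S ∈ S ∩ X₀ := by
      intro S hS
      exact Classical.epsilon_spec (⟨(h3 S hS).some, (h3 S hS).some_mem⟩ :
        ∃ x, x ∈ S ∩ X₀)
    refine Set.ncard_le_ncard_of_injOn f (fun S hS => ?_) ?_ (Set.toFinite _)
    · exact ⟨(hfspec S hS).2, h2 S hS (hfspec S hS).1⟩
    · intro S hS S' hS' heq
      by_contra hne
      have hd := trees_ne_disjoint (h1 S hS) (h1 S' hS') hne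
      exact (Set.disjoint_left.1 hd) (hfspec S hS).1 (heq ▸ (hfspec S' hS').1)

section classbounds
variable [Finite V] {C F : Set V} {z : ℕ} {K : G.Subgraph}
  {fX : Set V → Set V} {fp fq fa fb : Set V → V}

def Bundle (C : Set V) (K : G.Subgraph) (fX : Set V → Set V) (fp fq fa fb : Set V → V) :
    Prop :=
  ∀ T, T ∈ trees C K →
    IsFVS (graphRestrict K.spanningCoe Tᶜ) (fX T) ∧
    (∀ y ∈ T, ((fX T) ∩ cmp K.spanningCoe y).ncard + 1 ≤ (C ∩ cmp K.spanningCoe y).ncard) ∧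
    fp T ∈ C ∧ fq T ∈ C ∧ fp T ∉ fX T ∧ fq T ∉ fX T ∧ fa T ∈ T ∧ fb T ∈ T ∧
    K.spanningCoe.Adj (fa T) (fp T) ∧ K.spanningCoe.Adj (fb T) (fq T) ∧
    s(fa T, fp T) ≠ s(fb T, fq T)

lemma hacy_of_bundle (hf : Bundle C K fX fp fq fa fb) {S₀ : Set V} (hS₀ : S₀ ∈ trees C K) :
    (graphRestrict K.spanningCoe (S₀ᶜ ∩ (fX S₀)ᶜ)).IsAcyclic := by
  have h := (hf S₀ hS₀).1
  rw [IsFVS, gr_gr'] at h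
  exact h

lemma diag_bound (hK : Good G C F z K) (hf : Bundle C K fX fp fq fa fb) (p : V) :
    {T | T ∈ trees C K ∧ fp T = p ∧ fq T = p}.ncard ≤ z := by
  classical
  set D := {T | T ∈ trees C K ∧ fp T = p ∧ fq T = p} with hD
  rcases D.eq_empty_or_nonempty with hemp | ⟨S₀, hS₀D⟩
  · simp [hemp]
  obtain ⟨hS₀t, hS₀p, hS₀q⟩ := hS₀D
  obtain ⟨hX1, hX2, hpC0, -, hpX0, hqX0, haT0, hbT0, hadja0, hadjb0, hne0⟩ := hf S₀ hS₀t
  have hpC : p ∈ C := hS₀p ▸ hpC0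
  have hpX₀ : p ∉ fX S₀ := hS₀p ▸ hpX0
  have hacy := hacy_of_bundle hf hS₀t
  have htouch : ∀ S ∈ D \ {S₀}, (S ∩ fX S₀).Nonempty := by
    rintro S ⟨⟨hSt, hSp, hSq⟩, hSne⟩
    by_contra hcon
    rw [Set.not_nonempty_iff_eq_empty] at hcon
    obtain ⟨-, -, -, -, -, -, haS, hbS, hadjaS, hadjbS, hneS⟩ := hf S hSt
    have hab : fa S ≠ fb S := by
      intro hcc
      exact hneS (by rw [hcc, hSp, hSq])
    exact two_path_diag hacy hSt hS₀t (by simpa using hSne) hcon hpC hpX₀ haS hbS hab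
      (hSp ▸ hadjaS) (hSq ▸ hadjbS)
  set W := cmp K.spanningCoe p with hW
  have hsubW : ∀ S ∈ D, S ⊆ W := by
    rintro S ⟨hSt, hSp, -⟩
    exact tree_sub_cmp hSt (hf S hSt).2.2.2.2.2.2.1 (hSp ▸ (hf S hSt).2.2.2.2.2.2.2.2.1)
  have hcmpeq : cmp K.spanningCoe (fa S₀) = W := by
    rw [hW]
    exact cmp_eq_of_mem (adj_mem_cmp (hS₀p ▸ hadja0))
  have hXW : ((fX S₀) ∩ W).ncard + 1 ≤ (C ∩ W).ncard := by
    have := hX2 (fa S₀) haT0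
    rwa [hcmpeq] at this
  have hCW : (C ∩ W).ncard ≤ z := hK.zbd p
  have hcount : (D \ {S₀}).ncard ≤ ((fX S₀) ∩ W).ncard :=
    touched_count (fun S hS => hS.1.1) (fun S hS => hsubW S hS.1) htouch
  have hdiff : (D \ {S₀}).ncard = D.ncard - 1 :=
    Set.ncard_diff_singleton_of_mem (s := D) ⟨hS₀t, hS₀p, hS₀q⟩
  have hpos : 0 < D.ncard := Set.ncard_pos (Set.toFinite _) |>.2 ⟨S₀, hS₀t, hS₀p, hS₀q⟩
  omega

lemma offdiag_bound (hK : Good G C F z K) (hf : Bundle C K fX fp fq fa fb)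
    (p q : V) (hpq : p ≠ q) :
    {T | T ∈ trees C K ∧ s(fp T, fq T) = s(p, q)}.ncard ≤ z + 1 := by
  classical
  set D := {T | T ∈ trees C K ∧ s(fp T, fq T) = s(p, q)} with hD
  rcases D.eq_empty_or_nonempty with hemp | ⟨S₀, hS₀D⟩
  · simp [hemp]
  obtain ⟨hS₀t, hS₀e⟩ := hS₀D
  -- for each member, edges to p and q
  have hedges : ∀ S ∈ D, ∃ a b, a ∈ S ∧ b ∈ S ∧
      K.spanningCoe.Adj a p ∧ K.spanningCoe.Adj b q ∧ p ∉ fX S ∧ q ∉ fX S := by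
    rintro S ⟨hSt, hSe⟩
    obtain ⟨-, -, -, -, hpX, hqX, haS, hbS, hadja, hadjb, -⟩ := hf S hSt
    rw [Sym2.eq_iff] at hSe
    rcases hSe with ⟨h1, h2⟩ | ⟨h1, h2⟩
    · exact ⟨fa S, fb S, haS, hbS, h1 ▸ hadja, h2 ▸ hadjb, h1 ▸ hpX, h2 ▸ hqX⟩
    · exact ⟨fb S, fa S, hbS, haS, h2 ▸ hadjb, h1 ▸ hadja, h2 ▸ hqX, h1 ▸ hpX⟩
  obtain ⟨a0, b0, ha0, hb0, hadja0, hadjb0, hpX₀, hqX₀⟩ := hedges S₀ ⟨hS₀t, hS₀e⟩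
  have hpqC : p ∈ C ∧ q ∈ C := by
    obtain ⟨-, -, h3, h4, -⟩ := hf S₀ hS₀t
    rcases Sym2.eq_iff.1 hS₀e with ⟨h1, h2⟩ | ⟨h1, h2⟩
    · exact ⟨h1 ▸ h3, h2 ▸ h4⟩
    · exact ⟨h2 ▸ h4, h1 ▸ h3⟩
  have hpC : p ∈ C := hpqC.1
  have hqC : q ∈ C := hpqC.2
  have hacy := hacy_of_bundle hf hS₀t
  -- at most one untouched member besides S₀
  set O' := D \ {S₀} with hO'
  set Utch := {S | S ∈ O' ∧ (S ∩ fX S₀).Nonempty} with hU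
  have hsingle : (O' \ Utch).Subsingleton := by
    rintro S ⟨hSO, hSU⟩ S' ⟨hS'O, hS'U⟩
    by_contra hne
    have hSX : S ∩ fX S₀ = ∅ := by
      rw [← Set.not_nonempty_iff_eq_empty]
      exact fun hc => hSU ⟨hSO, hc⟩
    have hS'X : S' ∩ fX S₀ = ∅ := by
      rw [← Set.not_nonempty_iff_eq_empty]
      exact fun hc => hS'U ⟨hS'O, hc⟩
    obtain ⟨aS, bS, h1, h2, h3, h4, -, -⟩ := hedges S hSO.1
    obtain ⟨aS', bS', h1', h2', h3', h4', -, -⟩ := hedges S' hS'O.1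
    exact two_path_offdiag hacy hSO.1.1 hS'O.1.1 hS₀t hne
      (by simpa using hSO.2) (by simpa using hS'O.2) hSX hS'X
      hpC hqC hpq hpX₀ hqX₀ h1 h2 h1' h2' h3 h4 h3' h4'
  set W := cmp K.spanningCoe p with hW
  have hsubW : ∀ S ∈ D, S ⊆ W := by
    intro S hS
    obtain ⟨aS, -, h1, -, h3, -⟩ := hedges S hS
    exact tree_sub_cmp hS.1 h1 h3
  have hcmpeq : cmp K.spanningCoe a0 = W := by
    rw [hW]
    exact cmp_eq_of_mem (adj_mem_cmp hadja0)
  have hXW : ((fX S₀) ∩ W).ncard + 1 ≤ (C ∩ W).ncard := by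
    have := (hf S₀ hS₀t).2.1 a0 ha0
    rwa [hcmpeq] at this
  have hCW : (C ∩ W).ncard ≤ z := hK.zbd p
  have hcount : Utch.ncard ≤ ((fX S₀) ∩ W).ncard :=
    touched_count (fun S hS => hS.1.1.1) (fun S hS => hsubW S hS.1.1) (fun S hS => hS.2)
  have hsplit : O'.ncard ≤ Utch.ncard + 1 := by
    have hcov : O' ⊆ Utch ∪ (O' \ Utch) := by
      intro S hS
      by_cases hc : S ∈ Utch
      · exact Or.inl hc
      · exact Or.inr ⟨hS, hc⟩
    have h1 : O'.ncard ≤ Utch.ncard + (O' \ Utch).ncard :=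
      le_trans (Set.ncard_le_ncard hcov (Set.toFinite _)) (Set.ncard_union_le _ _)
    have h2 : (O' \ Utch).ncard ≤ 1 := by
      rcases (O' \ Utch).eq_empty_or_nonempty with he | ⟨x, hx⟩
      · simp [he]
      · have : O' \ Utch ⊆ {x} := fun y hy => hsingle hy hx ▸ rfl
        calc (O' \ Utch).ncard ≤ ({x} : Set (Set V)).ncard :=
              Set.ncard_le_ncard this (Set.toFinite _)
          _ = 1 := Set.ncard_singleton _
    omega
  have hdiff : O'.ncard = D.ncard - 1 :=
    Set.ncard_diff_singleton_of_mem (s := D) ⟨hS₀t, hS₀e⟩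
  have hpos : 0 < D.ncard := Set.ncard_pos (Set.toFinite _) |>.2 ⟨S₀, hS₀t, hS₀e⟩
  omega
end classbounds

lemma cmp_fp_fq {C : Set V} {K : G.Subgraph}
    {fX : Set V → Set V} {fp fq fa fb : Set V → V}
    (hf : Bundle C K fX fp fq fa fb) {T : Set V} (hT : T ∈ trees C K) :
    cmp K.spanningCoe (fp T) = cmp K.spanningCoe (fq T) := by
  obtain ⟨-, -, -, -, -, -, haT, hbT, hadja, hadjb, -⟩ := hf T hT
  have h1 : cmp K.spanningCoe (fp T) = cmp K.spanningCoe (fa T) :=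
    (cmp_eq_of_mem (adj_mem_cmp hadja)).symm
  have h2 : cmp K.spanningCoe (fa T) = cmp K.spanningCoe (fb T) := tree_cmp_const hT haT hbT
  have h3 : cmp K.spanningCoe (fb T) = cmp K.spanningCoe (fq T) :=
    cmp_eq_of_mem (adj_mem_cmp hadjb)
  rw [h1, h2, h3]

lemma count_trees [Finite V] {C F : Set V} {z : ℕ} {K : G.Subgraph}
    {fX : Set V → Set V} {fp fq fa fb : Set V → V}
    (hK : Good G C F z K) (hf : Bundle C K fX fp fq fa fb) :
    2 * (trees C K).ncard ≤ 2 * z * C.ncard + (z + 1) * ((z - 1) * C.ncard) := by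
  classical
  have : Fintype V := Fintype.ofFinite V
  set lab : Set V → Sym2 V := fun T => s(fp T, fq T) with hlab
  set TF : Finset (Set V) := (trees C K).toFinite.toFinset with hTF
  set CF : Finset V := C.toFinite.toFinset with hCF
  have hTFmem : ∀ {T}, T ∈ TF ↔ T ∈ trees C K := by
    intro T; rw [hTF, Set.Finite.mem_toFinset]
  have hCFmem : ∀ {p}, p ∈ CF ↔ p ∈ C := by
    intro p; rw [hCF, Set.Finite.mem_toFinset]
  have hTFcoe : (TF : Set (Set V)) = trees C K := Set.Finite.coe_toFinset _
  have htcard : (trees C K).ncard = TF.card := by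
    rw [← hTFcoe, Set.ncard_coe_finset]
  set LF : Finset (Sym2 V) := TF.image lab with hLF
  have hfib : TF.card = ∑ e ∈ LF, (TF.filter fun T => lab T = e).card :=
    Finset.card_eq_sum_card_fiberwise (fun T hT => Finset.mem_image_of_mem _ hT)
  set Dg : Finset (Sym2 V) := LF.filter Sym2.IsDiag with hDg
  set Og : Finset (Sym2 V) := LF.filter (fun e => ¬ e.IsDiag) with hOg
  have hsplit : ∑ e ∈ Dg, (TF.filter fun T => lab T = e).card
      + ∑ e ∈ Og, (TF.filter fun T => lab T = e).card
      = ∑ e ∈ LF, (TF.filter fun T => lab T = e).card :=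
    Finset.sum_filter_add_sum_filter_not LF _ _
  -- diagonal fibers
  have hDfib : ∀ e ∈ Dg, (TF.filter fun T => lab T = e).card ≤ z := by
    intro e he
    rcases Finset.eq_empty_or_nonempty (TF.filter fun T => lab T = e) with hemp | ⟨T₀, hT₀⟩
    · simp [hemp]
    rw [Finset.mem_filter] at hT₀
    have hdiag : e.IsDiag := (Finset.mem_filter.1 he).2
    have hpq : fp T₀ = fq T₀ := by
      have hld : (lab T₀).IsDiag := by rw [hT₀.2]; exact hdiag
      exact Sym2.mk_isDiag_iff.1 hld
    set p := fp T₀ with hp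
    have hsub : ((TF.filter fun T => lab T = e) : Set (Set V)) ⊆
        {T | T ∈ trees C K ∧ fp T = p ∧ fq T = p} := by
      intro S hS
      rw [Finset.coe_filter, Set.mem_setOf_eq] at hS
      obtain ⟨hStf, hSe⟩ := hS
      have : s(fp S, fq S) = s(fp T₀, fq T₀) := hSe.trans hT₀.2.symm
      rw [Sym2.eq_iff] at this
      refine ⟨hTFmem.1 hStf, ?_⟩
      rcases this with ⟨h1, h2⟩ | ⟨h1, h2⟩
      · exact ⟨h1, hpq ▸ h2⟩
      · exact ⟨hpq ▸ h1, h2⟩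
    calc (TF.filter fun T => lab T = e).card
        = ((TF.filter fun T => lab T = e) : Set (Set V)).ncard :=
          (Set.ncard_coe_finset _).symm
      _ ≤ ({T | T ∈ trees C K ∧ fp T = p ∧ fq T = p}).ncard :=
          Set.ncard_le_ncard hsub (Set.toFinite _)
      _ ≤ z := diag_bound hK hf p
  -- off-diagonal fibers
  have hOfib : ∀ e ∈ Og, (TF.filter fun T => lab T = e).card ≤ z + 1 := by
    intro e he
    rcases Finset.eq_empty_or_nonempty (TF.filter fun T => lab T = e) with hemp | ⟨T₀, hT₀⟩
    · simp [hemp]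
    rw [Finset.mem_filter] at hT₀
    have hndiag : ¬ e.IsDiag := (Finset.mem_filter.1 he).2
    have hpq : fp T₀ ≠ fq T₀ := by
      intro hc
      exact hndiag (hT₀.2 ▸ (Sym2.mk_isDiag_iff.2 hc))
    have hsub : ((TF.filter fun T => lab T = e) : Set (Set V)) ⊆
        {T | T ∈ trees C K ∧ s(fp T, fq T) = s(fp T₀, fq T₀)} := by
      intro S hS
      rw [Finset.coe_filter, Set.mem_setOf_eq] at hS
      exact ⟨hTFmem.1 hS.1, hS.2.trans hT₀.2.symm⟩
    calc (TF.filter fun T => lab T = e).card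
        = ((TF.filter fun T => lab T = e) : Set (Set V)).ncard :=
          (Set.ncard_coe_finset _).symm
      _ ≤ ({T | T ∈ trees C K ∧ s(fp T, fq T) = s(fp T₀, fq T₀)}).ncard :=
          Set.ncard_le_ncard hsub (Set.toFinite _)
      _ ≤ z + 1 := offdiag_bound hK hf _ _ hpq
  -- diag label count
  have hDcard : Dg.card ≤ CF.card := by
    rcases Finset.eq_empty_or_nonempty Dg with hemp | ⟨e₁, he₁⟩
    · simp [hemp]
    have hNV : Nonempty V := by
      obtain ⟨T, -, rfl⟩ := Finset.mem_image.1 (Finset.mem_filter.1 he₁).1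
      exact ⟨fp T⟩
    have hexist : ∀ e ∈ Dg, ∃ x, e = s(x, x) ∧ x ∈ CF := by
      intro e he
      rw [hDg, Finset.mem_filter] at he
      obtain ⟨T, hT, rfl⟩ := Finset.mem_image.1 he.1
      have hd : fp T = fq T := Sym2.mk_isDiag_iff.1 he.2
      obtain ⟨-, -, hpC, -⟩ := hf T (hTFmem.1 hT)
      exact ⟨fp T, by rw [show lab T = s(fp T, fq T) from rfl, ← hd], hCFmem.2 hpC⟩
    set ψ : Sym2 V → V := fun e => Classical.epsilon (fun x => e = s(x, x) ∧ x ∈ CF) with hψ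
    have hspec : ∀ e ∈ Dg, e = s(ψ e, ψ e) ∧ ψ e ∈ CF := by
      intro e he
      exact Classical.epsilon_spec (hexist e he)
    refine Finset.card_le_card_of_injOn ψ (fun e he => (hspec e he).2) ?_
    intro e he e' he' heq
    rw [(hspec e he).1, (hspec e' he').1, heq]
  -- off-diagonal double counting
  have hOcard : 2 * Og.card ≤ (z - 1) * CF.card := by
    have hmem2 : ∀ e ∈ Og, ∃ x y, e = s(x, y) ∧ x ≠ y ∧ x ∈ CF ∧ y ∈ CF ∧
        y ∈ cmp K.spanningCoe x := by
      intro e he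
      rw [hOg, Finset.mem_filter] at he
      obtain ⟨T, hT, rfl⟩ := Finset.mem_image.1 he.1
      have hd : fp T ≠ fq T := fun hc => he.2 (Sym2.mk_isDiag_iff.2 hc)
      obtain ⟨-, -, hpC, hqC, -⟩ := hf T (hTFmem.1 hT)
      refine ⟨fp T, fq T, rfl, hd, hCFmem.2 hpC, hCFmem.2 hqC, ?_⟩
      rw [cmp_fp_fq hf (hTFmem.1 hT)]
      exact mem_cmp_self _ _
    -- each off-diagonal label has exactly two members in CF
    have htwo : ∀ e ∈ Og, (CF.filter (fun x => x ∈ e)).card = 2 := by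
      intro e he
      obtain ⟨x, y, rfl, hxy, hxC, hyC, -⟩ := hmem2 e he
      have : CF.filter (fun a => a ∈ s(x, y)) = {x, y} := by
        ext a
        simp only [Finset.mem_filter, Sym2.mem_iff, Finset.mem_insert, Finset.mem_singleton]
        constructor
        · rintro ⟨-, h | h⟩
          · exact Or.inl h
          · exact Or.inr h
        · rintro (rfl | rfl)
          · exact ⟨hxC, Or.inl rfl⟩
          · exact ⟨hyC, Or.inr rfl⟩
      rw [this, Finset.card_insert_of_notMem (by simpa using hxy), Finset.card_singleton]
    -- swap the double sum
    have hswap : ∑ e ∈ Og, (CF.filter (fun x => x ∈ e)).card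
        = ∑ p ∈ CF, (Og.filter (fun e => p ∈ e)).card := by
      simp only [Finset.card_filter]
      rw [Finset.sum_comm]
    have hleft : ∑ e ∈ Og, (CF.filter (fun x => x ∈ e)).card = 2 * Og.card := by
      rw [Finset.sum_congr rfl htwo]
      simp [Nat.mul_comm]
    -- each vertex is in at most z - 1 off-diagonal labels
    have hdeg : ∀ p ∈ CF, (Og.filter (fun e => p ∈ e)).card ≤ z - 1 := by
      intro p hp
      have hNV : Nonempty V := ⟨p⟩
      have hexist : ∀ e ∈ Og.filter (fun e => p ∈ e),
          ∃ x, e = s(p, x) ∧ x ∈ (C ∩ cmp K.spanningCoe p).toFinite.toFinset.erase p := by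
        intro e he
        rw [Finset.mem_filter] at he
        obtain ⟨x, y, rfl, hxy, hxC, hyC, hycmp⟩ := hmem2 e he.1
        rw [Sym2.mem_iff] at he
        have hxcmp : x ∈ cmp K.spanningCoe x := mem_cmp_self _ _
        rcases he.2 with rfl | rfl
        · refine ⟨y, rfl, Finset.mem_erase.2 ⟨hxy.symm, ?_⟩⟩
          rw [Set.Finite.mem_toFinset]
          exact ⟨hCFmem.1 hyC, hycmp⟩
        · refine ⟨x, Sym2.eq_swap, Finset.mem_erase.2 ⟨hxy, ?_⟩⟩
          rw [Set.Finite.mem_toFinset]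
          refine ⟨hCFmem.1 hxC, ?_⟩
          rw [cmp_eq_of_mem hycmp]
          exact hxcmp
      set φ : Sym2 V → V := fun e => Classical.epsilon
        (fun x => e = s(p, x) ∧ x ∈ (C ∩ cmp K.spanningCoe p).toFinite.toFinset.erase p)
        with hφ
      have hspec : ∀ e ∈ Og.filter (fun e => p ∈ e), e = s(p, φ e) ∧
          φ e ∈ (C ∩ cmp K.spanningCoe p).toFinite.toFinset.erase p := by
        intro e he
        exact Classical.epsilon_spec (hexist e he)
      have hinj : (Og.filter (fun e => p ∈ e)).card ≤
          ((C ∩ cmp K.spanningCoe p).toFinite.toFinset.erase p).card := by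
        refine Finset.card_le_card_of_injOn φ (fun e he => (hspec e he).2) ?_
        intro e he e' he' heq
        rw [(hspec e he).1, (hspec e' he').1, heq]
      have hcc : ((C ∩ cmp K.spanningCoe p).toFinite.toFinset).card ≤ z := by
        have := hK.zbd p
        rwa [Set.ncard_eq_toFinset_card _ ((C ∩ cmp K.spanningCoe p).toFinite)] at this
      have hpcc : p ∈ (C ∩ cmp K.spanningCoe p).toFinite.toFinset := by
        rw [Set.Finite.mem_toFinset]
        exact ⟨hCFmem.1 hp, mem_cmp_self _ _⟩
      have := Finset.card_erase_of_mem hpcc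
      omega
    calc 2 * Og.card = ∑ e ∈ Og, (CF.filter (fun x => x ∈ e)).card := hleft.symm
      _ = ∑ p ∈ CF, (Og.filter (fun e => p ∈ e)).card := hswap
      _ ≤ ∑ p ∈ CF, (z - 1) := Finset.sum_le_sum hdeg
      _ = (z - 1) * CF.card := by rw [Finset.sum_const, smul_eq_mul, Nat.mul_comm]
  -- assemble
  have hsum1 : ∑ e ∈ Dg, (TF.filter fun T => lab T = e).card ≤ z * Dg.card := by
    calc ∑ e ∈ Dg, (TF.filter fun T => lab T = e).card ≤ ∑ _e ∈ Dg, z :=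
          Finset.sum_le_sum hDfib
      _ = z * Dg.card := by rw [Finset.sum_const, smul_eq_mul, Nat.mul_comm]
  have hsum2 : ∑ e ∈ Og, (TF.filter fun T => lab T = e).card ≤ (z + 1) * Og.card := by
    calc ∑ e ∈ Og, (TF.filter fun T => lab T = e).card ≤ ∑ _e ∈ Og, (z + 1) :=
          Finset.sum_le_sum hOfib
      _ = (z + 1) * Og.card := by rw [Finset.sum_const, smul_eq_mul, Nat.mul_comm]
  have hCcard : CF.card = C.ncard := by
    rw [← Set.ncard_coe_finset CF, Set.Finite.coe_toFinset]
  have hDle : Dg.card ≤ C.ncard := hCcard ▸ hDcard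
  have hOle : 2 * Og.card ≤ (z - 1) * C.ncard := hCcard ▸ hOcard
  have hmain : TF.card ≤ z * Dg.card + (z + 1) * Og.card := by
    rw [hfib, ← hsplit]
    omega
  have h2 : 2 * TF.card ≤ 2 * z * Dg.card + (z + 1) * (2 * Og.card) := by nlinarith
  calc 2 * (trees C K).ncard = 2 * TF.card := by rw [htcard]
    _ ≤ 2 * z * Dg.card + (z + 1) * (2 * Og.card) := h2
    _ ≤ 2 * z * C.ncard + (z + 1) * ((z - 1) * C.ncard) := by
        have := Nat.mul_le_mul_left (2 * z) hDle
        have := Nat.mul_le_mul_left (z + 1) hOle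
        omega

section transfers
variable {K : G.Subgraph}

lemma sub_adj_iff {Ssub : Set V} (a b : ↥K.verts) :
    (graphRestrict K.spanningCoe Ssub).Adj ↑a ↑b ↔
      (graphRestrict K.coe {u : ↥K.verts | ↑u ∈ Ssub}).Adj a b := Iff.rfl

lemma sub_adj_vert {Ssub : Set V} : ∀ a b : V,
    (graphRestrict K.spanningCoe Ssub).Adj a b → a ∈ K.verts :=
  fun _ _ h => K.edge_vert h.1

lemma fvs_coe_restrict [Finite V] (Ssub : Set V) :
    fvs (graphRestrict K.coe {u : ↥K.verts | ↑u ∈ Ssub}) =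
      fvs (graphRestrict K.spanningCoe Ssub) :=
  fvs_transfer sub_adj_iff sub_adj_vert

lemma reach_coe_iff (a b : ↥K.verts) :
    K.spanningCoe.Reachable ↑a ↑b ↔ K.coe.Reachable a b := by
  constructor
  · exact fun h => lift_reachable (fun a b hh => hh) (fun a b hh => K.edge_vert hh) h
  · exact fun h => up_reachable (fun a b hh => hh) h

lemma isFVS_sp_iff_coe (X : Set V) :
    IsFVS K.spanningCoe X ↔ IsFVS K.coe {u : ↥K.verts | ↑u ∈ X} := by
  refine acyclic_transfer (fun a b => ?_) (fun a b h => K.edge_vert h.1)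
  constructor
  · rintro ⟨h, ha, hb⟩; exact ⟨h, ha, hb⟩
  · rintro ⟨h, ha, hb⟩; exact ⟨h, ha, hb⟩

lemma hat_ncard {Ssub : Set V} (h : Ssub ⊆ K.verts) :
    ({u : ↥K.verts | ↑u ∈ Ssub}).ncard = Ssub.ncard := by
  have himg : Subtype.val '' {u : ↥K.verts | ↑u ∈ Ssub} = Ssub := by
    ext x
    constructor
    · rintro ⟨u, hu, rfl⟩; exact hu
    · intro hx; exact ⟨⟨x, h hx⟩, hx, rfl⟩
  calc ({u : ↥K.verts | ↑u ∈ Ssub}).ncard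
      = (Subtype.val '' {u : ↥K.verts | ↑u ∈ Ssub}).ncard :=
        (Set.ncard_image_of_injective _ Subtype.val_injective).symm
    _ = Ssub.ncard := by rw [himg]

lemma hat_ncard_le [Finite V] (Ssub : Set V) :
    ({u : ↥K.verts | ↑u ∈ Ssub}).ncard ≤ Ssub.ncard := by
  rw [← Set.ncard_image_of_injective {u : ↥K.verts | ↑u ∈ Ssub} Subtype.val_injective]
  exact Set.ncard_le_ncard (by rintro x ⟨u, hu, rfl⟩; exact hu) (Set.toFinite _)

/-- Every spanningCoe-level FVS has size at least `C.ncard`, from minimality at coe level. -/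
lemma min_translate [Finite V] {C : Set V}
    (hmin : IsMinFVS K.coe {u : ↥K.verts | ↑u ∈ C}) (hCsub : C ⊆ K.verts) :
    ∀ X : Set V, IsFVS K.spanningCoe X → C.ncard ≤ X.ncard := by
  intro X hX
  have h1 := hmin.2 _ ((isFVS_sp_iff_coe X).1 hX)
  rw [hat_ncard hCsub] at h1
  exact le_trans h1 (hat_ncard_le X)

/-- Build the invariant from a certificate. -/
lemma good_base [Finite V] {C F : Set V} {z : ℕ} {K : G.Subgraph}
    (hvsub : K.verts ⊆ C ∪ F) (hCsub : C ⊆ K.verts)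
    (hmin : IsMinFVS K.coe {u : ↥K.verts | ↑u ∈ C})
    (hord : HasCertOrder K.coe {u : ↥K.verts | ↑u ∈ C} z) :
    Good G C F z K := by
  have hminV := min_translate hmin hCsub
  have hcfvs : (graphRestrict K.spanningCoe Cᶜ).IsAcyclic :=
    (isFVS_sp_iff_coe C).2 hmin.1
  constructor
  · exact hvsub
  · exact hCsub
  · exact hcfvs
  · exact ifvs_of_min hcfvs hminV
  · intro x
    by_cases hx : x ∈ K.verts
    · have hord' := (hord ⟨x, hx⟩).2
      have heq : C ∩ cmp K.spanningCoe x =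
          Subtype.val '' ({u : ↥K.verts | ↑u ∈ C} ∩ {u | K.coe.Reachable u ⟨x, hx⟩}) := by
        ext y
        constructor
        · rintro ⟨hyC, hyR⟩
          refine ⟨⟨y, hCsub hyC⟩, ⟨hyC, ?_⟩, rfl⟩
          exact (reach_coe_iff _ _).1 hyR
        · rintro ⟨u, ⟨huC, huR⟩, rfl⟩
          exact ⟨huC, (reach_coe_iff _ _).2 huR⟩
      rw [heq, Set.ncard_image_of_injective _ Subtype.val_injective]
      exact hord'
    · have hcmp : cmp K.spanningCoe x = {x} := by
        ext u
        constructor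
        · intro hu
          by_contra hne
          obtain ⟨w⟩ := (hu : K.spanningCoe.Reachable u x).symm
          obtain ⟨y, hadj, -, -⟩ := (SimpleGraph.Walk.not_nil_iff).1
            ((SimpleGraph.Walk.not_nil_of_ne (fun hc => hne hc.symm)) : ¬ w.Nil)
          exact hx (K.edge_vert hadj)
        · rintro rfl; exact mem_cmp_self _ _
      rw [hcmp]
      have : C ∩ {x} = ∅ := by
        ext y
        simp only [Set.mem_inter_iff, Set.mem_singleton_iff, Set.mem_empty_iff_false, iff_false,
          not_and]
        rintro hyC rfl
        exact hx (hCsub hyC)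
      simp [this]
end transfers



lemma fvs_coe0 [Finite V] (K : G.Subgraph) : fvs K.coe = fvs K.spanningCoe :=
  fvs_transfer (fun _ _ => Iff.rfl) (fun _ _ h => K.edge_vert h)

lemma good_to_cert [Finite V] {C F : Set V} {z : ℕ} {K : G.Subgraph} (hK : Good G C F z K) :
    IsMinFVS K.coe {u : ↥K.verts | ↑u ∈ C} ∧
      HasCertOrder K.coe {u : ↥K.verts | ↑u ∈ C} z := by
  have hfsp : fvs K.spanningCoe = C.ncard := fvs_good hK
  refine ⟨⟨(isFVS_sp_iff_coe C).1 hK.cfvs, ?_⟩, ?_⟩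
  · intro Y hY
    rw [hat_ncard hK.csub]
    calc C.ncard = fvs K.spanningCoe := hfsp.symm
      _ = fvs K.coe := (fvs_coe0 K).symm
      _ ≤ Y.ncard := fvs_le hY
  · intro v
    have hReq : {u : ↥K.verts | K.coe.Reachable u v} =
        {u : ↥K.verts | ↑u ∈ cmp K.spanningCoe ↑v} := by
      ext u
      exact (reach_coe_iff u v).symm
    have hint : {u : ↥K.verts | ↑u ∈ C} ∩ {u : ↥K.verts | ↑u ∈ cmp K.spanningCoe ↑v} =
        {u : ↥K.verts | ↑u ∈ C ∩ cmp K.spanningCoe ↑v} := by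
      ext u
      simp only [Set.mem_inter_iff, Set.mem_setOf_eq]
    have hCsub2 : C ∩ cmp K.spanningCoe ↑v ⊆ K.verts :=
      Set.inter_subset_left.trans hK.csub
    constructor
    · rw [hReq, fvs_coe_restrict (cmp K.spanningCoe ↑v),
        hK.ifvs _ (compClosed_cmp _ _), hint, hat_ncard hCsub2]
    · rw [hReq, hint, hat_ncard hCsub2]
      exact hK.zbd ↑v


end ZA

open ZA in
theorem stmt9 [Fintype V] (G : SimpleGraph V) (z : ℕ) (C F : Set V)
    (h : IsZAntler G z C F) :
    ∃ F' ⊆ F, IsZAntler G z C F' ∧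
      (Nat.card ((G.induce F').ConnectedComponent) : ℚ) ≤
        (C.ncard : ℚ) / 2 * ((z : ℚ) ^ 2 + 2 * (z : ℚ) - 1) := by
  classical
  rcases isEmpty_or_nonempty V with hE | hNV
  · refine ⟨F, le_refl F, h, ?_⟩
    have hC : C = ∅ := Set.eq_empty_of_isEmpty C
    have h0 : Nat.card ((G.induce F).ConnectedComponent) = 0 := by
      haveI : IsEmpty ((G.induce F).ConnectedComponent) :=
        SimpleGraph.ConnectedComponent.isEmpty
      exact Nat.card_of_isEmpty
    rw [h0, hC]
    simp
  obtain ⟨⟨hFVC, -⟩, H, hHsub, ⟨⟨hCsubH, hminH⟩, hordH⟩⟩ := h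
  have hGood0 : Good G C F z H := good_base hHsub hCsubH hminH hordH
  obtain ⟨K, hK, hterm⟩ := prune H.verts.ncard H (le_refl _) hGood0
  obtain ⟨fX, fp, fq, fa, fb, hf⟩ := label_data hK hterm
  have h2t := count_trees hK hf
  -- definition of F'
  set F' : Set V := {x | x ∈ F ∧ ∃ y, y ∈ K.verts ∧ y ∉ C ∧
    (graphRestrict G F).Reachable x y} with hF'def
  have hF'F : F' ⊆ F := fun x hx => hx.1
  have hclosed : ∀ {x x'}, x ∈ F' → (graphRestrict G F).Reachable x' x → x' ∈ F' := by
    rintro x x' ⟨hxF, y, hyv, hyC, hyR⟩ hr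
    have hPF : ∀ a b, (graphRestrict G F).Adj a b → a ∈ F := fun a b hab => hab.2.1
    refine ⟨reachable_prop hPF hr hxF, y, hyv, hyC, hr.trans hyR⟩
  have hvertsF' : K.verts \ C ⊆ F' := by
    rintro y ⟨hyv, hyC⟩
    have hyF : y ∈ F := by
      rcases hK.vsub hyv with h | h
      · exact absurd h hyC
      · exact h
    exact ⟨hyF, y, hyv, hyC, SimpleGraph.Reachable.refl y⟩
  have hKsub' : K.verts ⊆ C ∪ F' := by
    intro x hx
    by_cases hxC : x ∈ C
    · exact Or.inl hxC
    · exact Or.inr (hvertsF' ⟨hx, hxC⟩)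
  have hKle : K.spanningCoe ≤ graphRestrict G (C ∪ F') := by
    intro a b hab
    exact ⟨hab.adj_sub, hKsub' (K.edge_vert hab), hKsub' (K.edge_vert hab.symm)⟩
  -- IsFVC
  have hFVC' : IsFVC G C F' := by
    refine ⟨Set.disjoint_of_subset_right hF'F hFVC.1,
      acyclic_anti (gr_mono_right G hF'F) hFVC.2.1, ?_⟩
    intro u₁ u₂ w₁ w₂ hu₁ hu₂ hreach hw₁ hw₂ ha₁ ha₂
    have hwF : ∀ u ∈ F', ∀ w, w ∉ C ∪ F' → G.Adj u w → w ∉ C ∪ F := by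
      intro u hu w hw hadj
      rintro (hc | hc)
      · exact hw (Or.inl hc)
      · refine hw (Or.inr (hclosed hu ?_))
        exact (SimpleGraph.Adj.reachable (⟨hadj.symm, hc, hF'F hu⟩ :
          (graphRestrict G F).Adj w u))
    exact hFVC.2.2 u₁ u₂ w₁ w₂ (hF'F hu₁) (hF'F hu₂)
      (hreach.mono (gr_mono_right G hF'F)) (hwF u₁ hu₁ w₁ hw₁ ha₁)
      (hwF u₂ hu₂ w₂ hw₂ ha₂) ha₁ ha₂
  -- IsAntler
  have hAnt' : IsAntler G C F' := by
    refine ⟨hFVC', le_fvs fun X hX => ?_⟩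
    have hXK : IsFVS K.spanningCoe X :=
      acyclic_anti (gr_mono_left hKle Xᶜ) hX
    calc C.ncard = fvs K.spanningCoe := (fvs_good hK).symm
      _ ≤ X.ncard := fvs_le hXK
  -- certificate
  have hcert' : IsZAntler G z C F' := by
    refine ⟨hAnt', K, hKsub', ⟨⟨hK.csub, (good_to_cert hK).1⟩, (good_to_cert hK).2⟩⟩
  -- counting
  have hle2 : graphRestrict K.spanningCoe Cᶜ ≤ graphRestrict G F := by
    intro a b hab
    have haF : a ∈ F := by
      rcases hK.vsub (K.edge_vert hab.1) with h | h
      · exact absurd h hab.2.1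
      · exact h
    have hbF : b ∈ F := by
      rcases hK.vsub (K.edge_vert hab.1.symm) with h | h
      · exact absurd h hab.2.2
      · exact h
    exact ⟨hab.1.adj_sub, haF, hbF⟩
  have hcount : Nat.card ((G.induce F').ConnectedComponent) ≤ (trees C K).ncard := by
    rcases isEmpty_or_nonempty ((G.induce F').ConnectedComponent) with hCE | hCN
    · rw [Nat.card_of_isEmpty]
      exact Nat.zero_le _
    have hrep : ∀ κ : (G.induce F').ConnectedComponent,
        ∃ v : ↥F', (G.induce F').connectedComponentMk v = κ := fun κ => κ.exists_rep
    choose rep hrep using hrep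
    set D : V → Set V := fun x => cmp (graphRestrict G F) x with hDdef
    set pick : Set V → V := fun s =>
      Classical.epsilon (fun y => y ∈ s ∧ y ∈ K.verts ∧ y ∉ C) with hpickdef
    have hpickspec : ∀ x ∈ F', pick (D x) ∈ D x ∧ pick (D x) ∈ K.verts ∧ pick (D x) ∉ C := by
      rintro x ⟨hxF, y, hyv, hyC, hyR⟩
      exact Classical.epsilon_spec (⟨y, hyR.symm, hyv, hyC⟩ :
        ∃ y', y' ∈ D x ∧ y' ∈ K.verts ∧ y' ∉ C)
    set f : (G.induce F').ConnectedComponent → Set V :=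
      fun κ => cmp (graphRestrict K.spanningCoe Cᶜ) (pick (D ↑(rep κ))) with hfdef
    have houtF' : ∀ κ, (↑(rep κ) : V) ∈ F' := fun κ => (rep κ).2
    have hftree : ∀ κ, f κ ∈ trees C K := fun κ =>
      ⟨pick (D ↑(rep κ)), (hpickspec _ (houtF' κ)).2.1, (hpickspec _ (houtF' κ)).2.2, rfl⟩
    have htreesub : ∀ y : V, cmp (graphRestrict K.spanningCoe Cᶜ) y ⊆ D y :=
      fun y => cmp_mono hle2 y
    have hfinj : Function.Injective f := by
      intro κ₁ κ₂ heq
      set x₁ : V := ↑(rep κ₁)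
      set x₂ : V := ↑(rep κ₂)
      set y₁ : V := pick (D x₁)
      set y₂ : V := pick (D x₂)
      have hy₂mem : y₂ ∈ f κ₁ := by
        rw [heq]
        exact mem_cmp_self _ _
      have hDy1 : D y₁ = D x₁ := cmp_eq_of_mem (hpickspec _ (houtF' κ₁)).1
      have hDy2 : D y₂ = D x₂ := cmp_eq_of_mem (hpickspec _ (houtF' κ₂)).1
      have h21 : y₂ ∈ D y₁ := htreesub y₁ hy₂mem
      have hDx : D x₁ = D x₂ := by
        rw [← hDy1, ← hDy2]
        exact (cmp_eq_of_mem h21).symm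
      have hx21 : x₂ ∈ D x₁ := by
        rw [hDx]
        exact mem_cmp_self _ _
      have hDsubF' : D x₁ ⊆ F' := fun u hu => hclosed (houtF' κ₁) hu
      obtain ⟨w⟩ := (hx21 : (graphRestrict G F).Reachable x₂ x₁)
      have hsupp : ∀ u ∈ w.support, u ∈ F' :=
        fun u hu => hDsubF' (support_subset_cmp w u hu)
      obtain ⟨w', -⟩ := walk_transfer' (L' := graphRestrict G F') w
        (fun a b hab ha hb => ⟨hab.1, hsupp a ha, hsupp b hb⟩)
      have hreach2 : (G.induce F').Reachable (rep κ₂) (rep κ₁) := by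
        refine lift_reachable (L := G.induce F') (M := graphRestrict G F')
          (fun a b hh => hh.1) (fun a b hh => hh.2.1) ?_
        exact ⟨w'⟩
      have hsound := SimpleGraph.ConnectedComponent.sound hreach2
      rw [hrep κ₂, hrep κ₁] at hsound
      exact hsound.symm
    calc Nat.card ((G.induce F').ConnectedComponent)
        ≤ Nat.card ↥(trees C K) :=
          Nat.card_le_card_of_injective (fun κ => (⟨f κ, hftree κ⟩ : ↥(trees C K)))
            (fun a b hh => hfinj (congrArg Subtype.val hh))
      _ = (trees C K).ncard := Nat.card_coe_set_eq _
  -- final arithmetic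
  refine ⟨F', hF'F, hcert', ?_⟩
  by_cases hz : z = 0
  · have hc0 : C.ncard = 0 := by
      by_contra hc
      have hCne : C.Nonempty := Set.nonempty_of_ncard_ne_zero hc
      obtain ⟨p, hp⟩ := hCne
      have := hK.zbd p
      rw [hz] at this
      have hpmem : p ∈ C ∩ cmp K.spanningCoe p := ⟨hp, mem_cmp_self _ _⟩
      have := Set.ncard_pos (Set.toFinite _) |>.2 ⟨p, hpmem⟩
      omega
    rw [hc0] at h2t ⊢
    have ht0 : (trees C K).ncard = 0 := by omega
    have : Nat.card ((G.induce F').ConnectedComponent) = 0 := by omega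
    rw [this]
    norm_num
  · have hz1 : 1 ≤ z := Nat.one_le_iff_ne_zero.2 hz
    have hcast : ((2 * z * C.ncard + (z + 1) * ((z - 1) * C.ncard) : ℕ) : ℚ)
        = (C.ncard : ℚ) * ((z : ℚ) ^ 2 + 2 * (z : ℚ) - 1) := by
      push_cast [Nat.cast_sub hz1]
      ring
    have hq1 : (2 * Nat.card ((G.induce F').ConnectedComponent) : ℚ)
        ≤ ((2 * z * C.ncard + (z + 1) * ((z - 1) * C.ncard) : ℕ) : ℚ) := by
      have : 2 * Nat.card ((G.induce F').ConnectedComponent) ≤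
          2 * z * C.ncard + (z + 1) * ((z - 1) * C.ncard) := by omega
      exact_mod_cast this
    rw [hcast] at hq1
    linarith
end

section
/- Let G be a finite simple graph, let (C,F) be a feedback vertex cut in G, and let v ∈ C be such that the induced subgraph G[F ∪ {v}] contains a v-flower of order |C| + 1. Then every minimum feedback vertex set of G contains v. -/
variable {V : Type*}

lemma gr_supp {G : SimpleGraph V} {T : Set V} {a b : V}
    (p : (graphRestrict G T).Walk a b) : ∀ x ∈ p.support, x = a ∨ x ∈ T := by
  induction p with
  | nil => intro x hx; left; simpa using hx
  | cons h q ih =>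
    intro x hx
    rw [SimpleGraph.Walk.support_cons, List.mem_cons] at hx
    rcases hx with hx | hx
    · exact Or.inl hx
    · rcases ih x hx with rfl | hx
      · exact Or.inr h.2.2
      · exact Or.inr hx

lemma gr_start {G : SimpleGraph V} {T : Set V} {a : V}
    (p : (graphRestrict G T).Walk a a) (hp : p ≠ SimpleGraph.Walk.nil) : a ∈ T := by
  cases p with
  | nil => exact absurd rfl hp
  | cons h q => exact h.2.1

lemma gr_transfer {G : SimpleGraph V} {T U : Set V} {a b : V}
    (p : (graphRestrict G T).Walk a b) (h : ∀ x ∈ p.support, x ∈ U) :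
    ∀ e ∈ p.edges, e ∈ (graphRestrict G U).edgeSet := by
  intro e
  induction e using Sym2.ind with
  | _ x y =>
    intro he
    rw [SimpleGraph.mem_edgeSet]
    have hadj := p.adj_of_mem_edges he
    exact ⟨hadj.1, h x (p.fst_mem_support_of_mem_edges he),
      h y (p.snd_mem_support_of_mem_edges he)⟩

lemma gr_exit {G : SimpleGraph V} {T F : Set V} :
    ∀ {x w : V} (q : (graphRestrict G T).Walk x w), x ∈ F → w ∉ F →
    ∃ u w', u ∈ F ∧ w' ∉ F ∧ (graphRestrict G F).Reachable x u ∧ s(u, w') ∈ q.edges := by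
  intro x w q
  induction q with
  | nil => intro hx hw; exact absurd hx hw
  | @cons a y b h r ih =>
    intro hx hw
    by_cases hy : y ∈ F
    · obtain ⟨u, w', hu, hw', hre, he⟩ := ih hy hw
      refine ⟨u, w', hu, hw', ?_, by simp [he]⟩
      have hadj : (graphRestrict G F).Adj a y := ⟨h.1, hx, hy⟩
      exact hadj.reachable.trans hre
    · exact ⟨a, y, hx, hy, SimpleGraph.Reachable.refl _, by simp⟩

lemma gr_finish {G : SimpleGraph V} {C F T : Set V}
    (hcut : ∀ u₁ u₂ w₁ w₂ : V, u₁ ∈ F → u₂ ∈ F →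
      (graphRestrict G F).Reachable u₁ u₂ →
      w₁ ∉ C ∪ F → w₂ ∉ C ∪ F → G.Adj u₁ w₁ → G.Adj u₂ w₂ → u₁ = u₂ ∧ w₁ = w₂)
    {a m : V} (p₁ : (graphRestrict G T).Walk a m) (p₂ : (graphRestrict G T).Walk m a)
    (hnodup : (p₁.edges ++ p₂.edges).Nodup)
    (hC : ∀ x, x ∈ p₁.support ∨ x ∈ p₂.support → x ∉ C)
    {u₁ w₁ u₂ w₂ : V} (hu₁ : u₁ ∈ F) (hu₂ : u₂ ∈ F)
    (hw₁ : w₁ ∉ F) (hw₂ : w₂ ∉ F)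
    (hre : (graphRestrict G F).Reachable u₁ u₂)
    (he₁ : s(u₁, w₁) ∈ p₁.edges) (he₂ : s(u₂, w₂) ∈ p₂.edges) : False := by
  have hadj₁ : G.Adj u₁ w₁ := (p₁.adj_of_mem_edges he₁).1
  have hadj₂ : G.Adj u₂ w₂ := (p₂.adj_of_mem_edges he₂).1
  have hw₁C : w₁ ∉ C ∪ F := by
    intro hm
    rcases hm with hm | hm
    · exact hC w₁ (Or.inl (p₁.snd_mem_support_of_mem_edges he₁)) hm
    · exact hw₁ hm
  have hw₂C : w₂ ∉ C ∪ F := by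
    intro hm
    rcases hm with hm | hm
    · exact hC w₂ (Or.inr (p₂.snd_mem_support_of_mem_edges he₂)) hm
    · exact hw₂ hm
  obtain ⟨h1, h2⟩ := hcut u₁ u₂ w₁ w₂ hu₁ hu₂ hre hw₁C hw₂C hadj₁ hadj₂
  subst h1; subst h2
  exact List.disjoint_of_nodup_append hnodup he₁ he₂

theorem stmt13 [Fintype V] (G : SimpleGraph V) (C F : Set V) (v : V)
    (h : IsFVC G C F) (hv : v ∈ C)
    (hfl : HasFlower (graphRestrict G (F ∪ {v})) v (C.ncard + 1)) :
    ∀ S : Set V, IsMinFVS G S → v ∈ S := by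
  classical
  obtain ⟨hCF, hFforest, hcut⟩ := h
  intro S hS
  by_contra hvS
  obtain ⟨c, hc, hdisj⟩ := hfl
  have hmeet : ∀ i, ∃ x, x ∈ (c i).support ∧ x ∈ S := by
    intro i
    by_contra hno
    push_neg at hno
    exact hS.1 ((c i).transfer _ (gr_transfer _ hno)) ((hc i).transfer _)
  choose s hs1 hs2 using hmeet
  have hsnv : ∀ i, s i ≠ v := fun i he => hvS (he ▸ hs2 i)
  have hsF : ∀ i, s i ∈ F := by
    intro i
    rcases gr_supp (c i) (s i) (hs1 i) with he | hm
    · exact absurd he (hsnv i)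
    · rw [Set.mem_union, Set.mem_singleton_iff] at hm
      rcases hm with hm | hm
      · exact hm
      · exact absurd hm (hsnv i)
  have hsinj : Function.Injective s := by
    intro i j hij
    by_contra hne
    have := hdisj i j hne
    have hmem : s i ∈ {x | x ∈ (c i).support} ∩ {x | x ∈ (c j).support} :=
      ⟨hs1 i, hij ▸ hs1 j⟩
    rw [this] at hmem
    exact hsnv i hmem
  have hcard : C.ncard + 1 ≤ (S ∩ F).ncard := by
    have hinj : Function.Injective
        (fun i : Fin (C.ncard + 1) => (⟨s i, hs2 i, hsF i⟩ : ↥(S ∩ F))) := by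
      intro i j hij
      exact hsinj (congrArg Subtype.val hij)
    have := Nat.card_le_card_of_injective _ hinj
    rwa [Nat.card_eq_fintype_card, Fintype.card_fin, Nat.card_coe_set_eq] at this
  set S' : Set V := (S \ F) ∪ C with hS'def
  have hCS' : C ⊆ S' := Set.subset_union_right
  have hFVS' : IsFVS G S' := by
    intro w₀ p hp
    have hsupp : ∀ x ∈ p.support, x ∉ S' := by
      intro x hx
      have hw₀ : w₀ ∈ S'ᶜ := gr_start p hp.ne_nil
      rcases gr_supp p x hx with rfl | hxT
      · exact hw₀
      · exact hxT
    by_cases hall : ∀ x ∈ p.support, x ∈ F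
    · exact hFforest (p.transfer _ (gr_transfer p hall)) (hp.transfer _)
    · push_neg at hall
      obtain ⟨w₁, hw₁s, hw₁F⟩ := hall
      by_cases hnone : ∀ x ∈ p.support, x ∉ F
      · have hQ : ∀ x ∈ p.support, x ∈ Sᶜ := by
          intro x hx hxS
          exact hsupp x hx (Or.inl ⟨hxS, hnone x hx⟩)
        exact hS.1 (p.transfer _ (gr_transfer p hQ)) (hp.transfer _)
      · push_neg at hnone
        obtain ⟨y, hys, hyF⟩ := hnone
        have hnodupP : p.edges.Nodup := hp.isCircuit.isTrail.edges_nodup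
        by_cases hw₀F : w₀ ∈ F
        · -- split at w₁ ∉ F
          have hnodup : ((p.takeUntil w₁ hw₁s).edges ++ (p.dropUntil w₁ hw₁s).edges).Nodup := by
            rw [← SimpleGraph.Walk.edges_append, p.take_spec hw₁s]
            exact hnodupP
          have hC : ∀ x, x ∈ (p.takeUntil w₁ hw₁s).support ∨
              x ∈ (p.dropUntil w₁ hw₁s).support → x ∉ C := by
            intro x hx hxC
            rcases hx with hx | hx
            · exact hsupp x (p.support_takeUntil_subset hw₁s hx) (hCS' hxC)
            · exact hsupp x (p.support_dropUntil_subset hw₁s hx) (hCS' hxC)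
          obtain ⟨uA, wA, huA, hwA, hreA, heA⟩ := gr_exit (p.takeUntil w₁ hw₁s) hw₀F hw₁F
          obtain ⟨uB, wB, huB, hwB, hreB, heB⟩ := gr_exit (p.dropUntil w₁ hw₁s).reverse hw₀F hw₁F
          rw [SimpleGraph.Walk.edges_reverse, List.mem_reverse] at heB
          exact gr_finish hcut _ _ hnodup hC huA huB hwA hwB (hreA.symm.trans hreB) heA heB
        · -- split at y ∈ F
          have hnodup : ((p.takeUntil y hys).edges ++ (p.dropUntil y hys).edges).Nodup := by
            rw [← SimpleGraph.Walk.edges_append, p.take_spec hys]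
            exact hnodupP
          have hC : ∀ x, x ∈ (p.takeUntil y hys).support ∨
              x ∈ (p.dropUntil y hys).support → x ∉ C := by
            intro x hx hxC
            rcases hx with hx | hx
            · exact hsupp x (p.support_takeUntil_subset hys hx) (hCS' hxC)
            · exact hsupp x (p.support_dropUntil_subset hys hx) (hCS' hxC)
          obtain ⟨uA, wA, huA, hwA, hreA, heA⟩ := gr_exit (p.takeUntil y hys).reverse hyF hw₀F
          rw [SimpleGraph.Walk.edges_reverse, List.mem_reverse] at heA
          obtain ⟨uB, wB, huB, hwB, hreB, heB⟩ := gr_exit (p.dropUntil y hys) hyF hw₀F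
          exact gr_finish hcut _ _ hnodup hC huA huB hwA hwB (hreA.symm.trans hreB) heA heB
  have hle := hS.2 S' hFVS'
  have h1 : S'.ncard ≤ (S \ F).ncard + C.ncard := Set.ncard_union_le _ _
  have h2 : (S ∩ F).ncard + (S \ F).ncard = S.ncard :=
    Set.ncard_inter_add_ncard_diff_eq_ncard S F
  omega
end
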